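/- arXiv:1203.0105 — 6 statements merged into one kernel-verified Lean document; each statement's English description precedes it below -/
import Mathlib

section
/- Let V' be an n'-dimensional left vector space over a division ring R' and let J ⊆ G_{k'}(V') be a J(n,k)-subset with 1 < k < n−k. If J is of first type, then for every star C of Γ_{k'}(V') with |J ∩ C| ≥ 2 one has |J ∩ C| = n−k+1, and for every top C of Γ_{k'}(V') with |J ∩ C| ≥ 2 one has |J ∩ C| = k+1. If J is of second type, then for every star C with |J ∩ C| ≥ 2 one has |J ∩ C| = k+1, and for every top C with |J ∩ C| ≥ 2 one has |J ∩ C| = n−k+1. -/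
open Submodule Set Function Module

/-- The Grassmannian of `k`-dimensional subspaces of `V`. -/
def Grass (R V : Type*) [DivisionRing R] [AddCommGroup V] [Module R V] (k : ℕ) : Type _ :=
  {P : Submodule R V // Module.finrank R ↥P = k}

/-- The Grassmann graph `Γ_k(V)`: two `k`-dimensional subspaces are adjacent iff their
intersection is `(k-1)`-dimensional. -/
def grassGraph (R V : Type*) [DivisionRing R] [AddCommGroup V] [Module R V] (k : ℕ) :
    SimpleGraph (Grass R V k) where
  Adj P Q := P ≠ Q ∧ Module.finrank R ↥(P.1 ⊓ Q.1) = k - 1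
  symm := by
    constructor
    intro P Q h
    exact ⟨h.1.symm, by rw [inf_comm]; exact h.2⟩
  loopless := by
    constructor
    intro P h
    exact h.1 rfl

/-- Vertices of the Johnson graph: `k`-element subsets of `{1, …, n}`. -/
abbrev JVertex (n k : ℕ) := {A : Finset (Fin n) // A.card = k}

/-- The Johnson graph `J(n,k)`: two `k`-element subsets are adjacent iff their
intersection has `k-1` elements. -/
def johnsonGraph (n k : ℕ) : SimpleGraph (JVertex n k) where
  Adj A B := A ≠ B ∧ (A.1 ∩ B.1).card = k - 1
  symm := by
    constructor
    intro A B h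
    exact ⟨h.1.symm, by rw [Finset.inter_comm]; exact h.2⟩
  loopless := by
    constructor
    intro A h
    exact h.1 rfl

/-- A family of vectors is `m`-independent if every `m`-element subfamily is
linearly independent. -/
def MIndep (R : Type*) {W : Type*} [DivisionRing R] [AddCommGroup W] [Module R W]
    {n : ℕ} (m : ℕ) (x : Fin n → W) : Prop :=
  ∀ A : Finset (Fin n), A.card = m → LinearIndependent R (fun i : A => x (i : Fin n))

/-- `J_k(X)`: the set of all `k`-dimensional subspaces spanned by `k`-element subsets of
the family `x`. -/
def JkSet (R : Type*) {W : Type*} [DivisionRing R] [AddCommGroup W] [Module R W]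
    {n : ℕ} (k : ℕ) (x : Fin n → W) : Set (Submodule R W) :=
  {P | ∃ A : Finset (Fin n), A.card = k ∧ P = Submodule.span R (x '' ↑A)}

/-- Apartments of `G_k(V)`: the sets of `k`-dimensional subspaces spanned by subsets
of a base of the `n`-dimensional space `V`. -/
def IsApartment (R V : Type*) [DivisionRing R] [AddCommGroup V] [Module R V]
    (n k : ℕ) (𝒜 : Set (Grass R V k)) : Prop :=
  ∃ b : Basis (Fin n) R V, 𝒜 = {P : Grass R V k | P.1 ∈ JkSet R k ⇑b}

/-- A `J(n,k)`-subset of `G_{k'}(V')`: the image of an isometric embedding of the Johnson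
graph `J(n,k)` in the Grassmann graph `Γ_{k'}(V')`. -/
def IsJSubset (R' V' : Type*) [DivisionRing R'] [AddCommGroup V'] [Module R' V']
    (n k k' : ℕ) (J : Set (Grass R' V' k')) : Prop :=
  ∃ g : JVertex n k → Grass R' V' k',
    Function.Injective g ∧
    (∀ A B : JVertex n k,
      (grassGraph R' V' k').dist (g A) (g B) = (johnsonGraph n k).dist A B) ∧
    Set.range g = J

/-- A `J`-mapping: a mapping transferring every apartment of `G_k(V)` to a
`J(n,k)`-subset of `G_{k'}(V')`. -/
def IsJMapping (R V R' V' : Type*) [DivisionRing R] [AddCommGroup V] [Module R V]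
    [DivisionRing R'] [AddCommGroup V'] [Module R' V'] (n k k' : ℕ)
    (f : Grass R V k → Grass R' V' k') : Prop :=
  ∀ 𝒜 : Set (Grass R V k), IsApartment R V n k 𝒜 → IsJSubset R' V' n k k' (f '' 𝒜)

/-- A `J(n,k)`-subset of first type: there are `S ∈ G_{k'-k}(V')` and a `(2k)`-independent
`n`-element family `x` in `V'/S` such that the subset consists of the preimages in `V'`
of the members of `J_k(X)`. -/
def IsFirstType (R' V' : Type*) [DivisionRing R'] [AddCommGroup V'] [Module R' V']
    (n k k' : ℕ) (J : Set (Grass R' V' k')) : Prop :=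
  ∃ S : Submodule R' V', Module.finrank R' ↥S = k' - k ∧
    ∃ x : Fin n → (V' ⧸ S), Function.Injective x ∧ MIndep R' (2 * k) x ∧
      J = {P : Grass R' V' k' | ∃ A : Finset (Fin n), A.card = k ∧
        P.1 = Submodule.comap S.mkQ (Submodule.span R' (x '' ↑A))}

/-- A `J(n,k)`-subset of second type: there are `U ∈ G_{k'+k}(V')` and a `(2k)`-independent
`n`-element family `y` of linear functionals on `U` such that the subset consists of the
annihilators in `U` of the members of `J_k(Y)` (i.e. the intersections of `k` distinct
kernels of the `y i`). -/
def IsSecondType (R' V' : Type*) [DivisionRing R'] [AddCommGroup V'] [Module R' V']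
    (n k k' : ℕ) (J : Set (Grass R' V' k')) : Prop :=
  ∃ U : Submodule R' V', Module.finrank R' ↥U = k' + k ∧
    ∃ y : Fin n → (↥U →ₗ[R'] R'), Function.Injective y ∧ MIndep R'ᵐᵒᵖ (2 * k) y ∧
      J = {P : Grass R' V' k' | ∃ A : Finset (Fin n), A.card = k ∧
        P.1 = Submodule.map U.subtype (⨅ i ∈ A, LinearMap.ker (y i))}


section AuxIndep
variable {R W : Type*} [DivisionRing R] [AddCommGroup W] [Module R W]
  {n m : ℕ} {x : Fin n → W}

theorem Aux.mindep_subset (hx : MIndep R m x) (hmn : m ≤ n) {A : Finset (Fin n)}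
    (hA : A.card ≤ m) : LinearIndependent R (fun i : A => x (i : Fin n)) := by
  obtain ⟨B, hAB, hB⟩ := Finset.exists_superset_card_eq hA (by simpa using hmn)
  have hBind := hx B hB
  have : (fun i : A => x (i : Fin n)) =
      (fun i : B => x (i : Fin n)) ∘ (fun i : A => (⟨i.1, hAB i.2⟩ : B)) := rfl
  rw [this]
  exact hBind.comp _ (fun a b hab => Subtype.ext (by simpa using congrArg Subtype.val hab))

theorem Aux.finrank_span_image (hx : MIndep R m x) (hmn : m ≤ n) {A : Finset (Fin n)}
    (hA : A.card ≤ m) : finrank R (span R (x '' ↑A)) = A.card := by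
  have h := finrank_span_eq_card (Aux.mindep_subset hx hmn hA)
  have himg : Set.range (fun i : A => x (i : Fin n)) = x '' ↑A := by
    ext w; simp
  rw [himg] at h
  simpa using h

theorem Aux.not_mem_span_image (hx : MIndep R m x) (hmn : m ≤ n) {A : Finset (Fin n)}
    {i : Fin n} (hA : A.card + 1 ≤ m) (hi : i ∉ A) : x i ∉ span R (x '' ↑A) := by
  have hind := Aux.mindep_subset hx hmn (A := insert i A) (by
    rw [Finset.card_insert_of_notMem hi]; exact hA)
  have h := hind.notMem_span_image (s := {j : (insert i A : Finset (Fin n)) | (j : Fin n) ∈ A})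
    (x := ⟨i, Finset.mem_insert_self i A⟩) (by simpa using hi)
  have : (fun j : (insert i A : Finset (Fin n)) => x (j : Fin n)) ''
      {j : (insert i A : Finset (Fin n)) | (j : Fin n) ∈ A} = x '' ↑A := by
    ext w
    constructor
    · rintro ⟨⟨j, hj⟩, hj2, rfl⟩; exact ⟨j, hj2, rfl⟩
    · rintro ⟨j, hj, rfl⟩; exact ⟨⟨j, Finset.mem_insert_of_mem hj⟩, hj, rfl⟩
  rwa [this] at h

theorem Aux.span_le_span_iff (hx : MIndep R m x) (hmn : m ≤ n) {A B : Finset (Fin n)}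
    (hB : B.card + 1 ≤ m) :
    span R (x '' ↑A) ≤ span R (x '' ↑B) ↔ A ⊆ B := by
  constructor
  · intro h i hiA
    by_contra hiB
    exact Aux.not_mem_span_image hx hmn hB hiB
      (h (subset_span ⟨i, by simpa using hiA, rfl⟩))
  · intro h
    exact span_mono (Set.image_mono (by exact_mod_cast h))

theorem Aux.span_inf [FiniteDimensional R W] (hx : MIndep R m x) (hmn : m ≤ n)
    {A B : Finset (Fin n)} (hAB : (A ∪ B).card ≤ m) :
    span R (x '' ↑A) ⊓ span R (x '' ↑B) = span R (x '' ↑(A ∩ B)) := by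
  have hA : A.card ≤ m := le_trans (Finset.card_le_card Finset.subset_union_left) hAB
  have hB : B.card ≤ m := le_trans (Finset.card_le_card Finset.subset_union_right) hAB
  have hI : (A ∩ B).card ≤ m :=
    le_trans (Finset.card_le_card (Finset.inter_subset_left)) hA
  have hsup : span R (x '' ↑A) ⊔ span R (x '' ↑B) = span R (x '' ↑(A ∪ B)) := by
    rw [← Submodule.span_union, ← Set.image_union, Finset.coe_union]
  have hdim := Submodule.finrank_sup_add_finrank_inf_eq (span R (x '' ↑A)) (span R (x '' ↑B))
  rw [hsup, Aux.finrank_span_image hx hmn hAB, Aux.finrank_span_image hx hmn hA,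
    Aux.finrank_span_image hx hmn hB] at hdim
  have hle : span R (x '' ↑(A ∩ B)) ≤ span R (x '' ↑A) ⊓ span R (x '' ↑B) :=
    le_inf (span_mono (Set.image_mono (by exact_mod_cast Finset.inter_subset_left)))
      (span_mono (Set.image_mono (by exact_mod_cast Finset.inter_subset_right)))
  refine (Submodule.eq_of_le_of_finrank_eq hle ?_).symm
  rw [Aux.finrank_span_image hx hmn hI]
  have := Finset.card_union_add_card_inter A B
  omega

end AuxIndep

section AuxComap
variable {R V : Type*} [DivisionRing R] [AddCommGroup V] [Module R V]
  [FiniteDimensional R V] (S : Submodule R V)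

theorem Aux.finrank_comap_mkQ (W : Submodule R (V ⧸ S)) :
    finrank R ↥(W.comap S.mkQ) = finrank R ↥S + finrank R ↥W := by
  have hS : S ≤ W.comap S.mkQ := by
    intro v hv
    have : S.mkQ v = 0 := by
      simpa [Submodule.mkQ_apply] using (Submodule.Quotient.mk_eq_zero S).2 hv
    simp [Submodule.mem_comap, this]
  set p := W.comap S.mkQ
  have hrange : LinearMap.range (S.mkQ.domRestrict p) = W := by
    rw [LinearMap.range_domRestrict]
    exact Submodule.map_comap_eq_of_surjective (Submodule.mkQ_surjective S) W
  have hker : LinearMap.ker (S.mkQ.domRestrict p) = S.comap p.subtype := by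
    ext u
    simp [LinearMap.mem_ker, Submodule.mem_comap, Submodule.mkQ_apply,
      Submodule.Quotient.mk_eq_zero]
  have h := LinearMap.finrank_range_add_finrank_ker (S.mkQ.domRestrict p)
  rw [hrange, hker] at h
  have : finrank R ↥(S.comap p.subtype) = finrank R ↥S :=
    (Submodule.comapSubtypeEquivOfLe hS).finrank_eq
  omega

theorem Aux.comap_mkQ_le_iff {W₁ W₂ : Submodule R (V ⧸ S)} :
    W₁.comap S.mkQ ≤ W₂.comap S.mkQ ↔ W₁ ≤ W₂ :=
  comap_le_comap_iff_of_surjective (Submodule.mkQ_surjective S)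

end AuxComap

section AuxDual
variable {R U : Type*} [DivisionRing R] [AddCommGroup U] [Module R U]
  {n m : ℕ} {y : Fin n → (U →ₗ[R] R)}

theorem Aux.phi_surj (hy : MIndep Rᵐᵒᵖ m y) (hmn : m ≤ n) :
    ∀ A : Finset (Fin n), A.card ≤ m →
      Surjective (LinearMap.pi (fun j : A => y (j : Fin n)) : U →ₗ[R] (A → R)) := by
  intro A
  induction A using Finset.induction_on with
  | empty =>
    intro _ v
    exact ⟨0, funext fun j => absurd j.2 (by
      simp only [Finset.notMem_empty, not_false_iff])⟩
  | insert i A hiA ih =>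
    intro hcard
    have hcA : A.card + 1 ≤ m := by
      rwa [Finset.card_insert_of_notMem hiA] at hcard
    have hsurj := ih (le_of_lt hcA)
    have hu0 : ∃ u₀ : U, (∀ j ∈ A, y j u₀ = 0) ∧ y i u₀ ≠ 0 := by
      by_contra h0
      push_neg at h0
      set u : A → U := fun j => (hsurj (Pi.single j 1)).choose with hu
      have hu_spec : ∀ j : A, ∀ l : A, y (l : Fin n) (u j) = if l = j then 1 else 0 := by
        intro j l
        have := (hsurj (Pi.single j 1)).choose_spec
        have h2 := congrFun this l
        simp only [LinearMap.pi_apply] at h2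
        rw [h2, Pi.single_apply]
      have key : y i = ∑ j : A, (MulOpposite.op (y i (u j))) • y (j : Fin n) := by
        ext v
        have hw : ∀ j ∈ A, y j (v - ∑ l : A, (y (l : Fin n) v) • u l) = 0 := by
          intro j hj
          have hs : y j (∑ l : A, (y (l : Fin n) v) • u l)
              = ∑ l : A, (y (l : Fin n) v) * y j (u l) := by
            rw [map_sum]; congr 1; ext l; rw [map_smul, smul_eq_mul]
          rw [map_sub, hs, Finset.sum_eq_single (⟨j, hj⟩ : A)]
          · rw [hu_spec ⟨j, hj⟩ ⟨j, hj⟩, if_pos rfl, mul_one, sub_self]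
          · intro l _ hl
            rw [show y (j : Fin n) (u l) = y ((⟨j, hj⟩ : A) : Fin n) (u l) from rfl,
              hu_spec l ⟨j, hj⟩, if_neg (by simpa [eq_comm] using hl), mul_zero]
          · intro h; exact absurd (Finset.mem_univ _) h
        have := h0 _ hw
        rw [map_sub, map_sum, sub_eq_zero] at this
        rw [this]
        simp only [LinearMap.sum_apply, LinearMap.smul_apply, MulOpposite.smul_eq_mul_unop,
          MulOpposite.unop_op, map_smul, smul_eq_mul]
      have hmem : y i ∈ span Rᵐᵒᵖ (y '' ↑A) := by
        rw [key]
        exact Submodule.sum_mem _ fun j _ =>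
          Submodule.smul_mem _ _ (subset_span ⟨j, j.2, rfl⟩)
      exact Aux.not_mem_span_image hy hmn hcA hiA hmem
    obtain ⟨u₀, hu₀A, hu₀i⟩ := hu0
    intro v
    obtain ⟨w, hw⟩ := hsurj (fun j => v ⟨j, Finset.mem_insert_of_mem j.2⟩)
    set c := y i u₀
    refine ⟨w + ((v ⟨i, Finset.mem_insert_self i A⟩ - y i w) * c⁻¹) • u₀, funext ?_⟩
    rintro ⟨l, hl⟩
    simp only [LinearMap.pi_apply, map_add, map_smul, smul_eq_mul]
    rcases Finset.mem_insert.1 hl with rfl | hlA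
    · rw [mul_assoc, inv_mul_cancel₀ hu₀i, mul_one]
      abel
    · rw [hu₀A l hlA, mul_zero, add_zero]
      have := congrFun hw ⟨l, hlA⟩
      simp only [LinearMap.pi_apply] at this
      rw [this]

theorem Aux.iInf_ker_eq_ker_pi (A : Finset (Fin n)) :
    (⨅ j ∈ A, LinearMap.ker (y j)) =
      LinearMap.ker (LinearMap.pi (fun j : A => y (j : Fin n)) : U →ₗ[R] (A → R)) := by
  rw [LinearMap.ker_pi]
  ext u
  simp [Submodule.mem_iInf, LinearMap.mem_ker, Subtype.forall]

theorem Aux.finrank_iInf_ker [FiniteDimensional R U] (hy : MIndep Rᵐᵒᵖ m y) (hmn : m ≤ n)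
    {A : Finset (Fin n)} (hA : A.card ≤ m) :
    finrank R ↥(⨅ j ∈ A, LinearMap.ker (y j)) + A.card = finrank R U := by
  have hs := Aux.phi_surj hy hmn A hA
  have h := LinearMap.finrank_range_add_finrank_ker
    (LinearMap.pi (fun j : A => y (j : Fin n)) : U →ₗ[R] (A → R))
  rw [LinearMap.range_eq_top.2 hs] at h
  rw [Aux.iInf_ker_eq_ker_pi]
  have hpi : finrank R (⊤ : Submodule R (A → R)) = A.card := by
    rw [finrank_top, Module.finrank_pi]
    simp
  omega

theorem Aux.exists_not_in_ker [FiniteDimensional R U] (hy : MIndep Rᵐᵒᵖ m y) (hmn : m ≤ n)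
    {A : Finset (Fin n)} {i : Fin n} (hA : A.card + 1 ≤ m) (hi : i ∉ A) :
    ¬ (⨅ j ∈ A, LinearMap.ker (y j)) ≤ LinearMap.ker (y i) := by
  have hs := Aux.phi_surj hy hmn (insert i A) (by rwa [Finset.card_insert_of_notMem hi])
  obtain ⟨u, hu⟩ := hs (Pi.single ⟨i, Finset.mem_insert_self i A⟩ 1)
  intro hle
  have huA : u ∈ ⨅ j ∈ A, LinearMap.ker (y j) := by
    rw [Submodule.mem_iInf]
    intro j
    rw [Submodule.mem_iInf]
    intro hj
    have := congrFun hu ⟨j, Finset.mem_insert_of_mem hj⟩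
    simp only [LinearMap.pi_apply] at this
    rw [LinearMap.mem_ker, this, Pi.single_apply, if_neg]
    intro h
    have : j = i := congrArg Subtype.val h
    exact hi (this ▸ hj)
  have := hle huA
  rw [LinearMap.mem_ker] at this
  have h1 := congrFun hu ⟨i, Finset.mem_insert_self i A⟩
  simp only [LinearMap.pi_apply] at h1
  rw [this, Pi.single_apply, if_pos rfl] at h1
  exact one_ne_zero h1.symm

theorem Aux.iInf_ker_union (A B : Finset (Fin n)) :
    (⨅ j ∈ (A ∪ B), LinearMap.ker (y j)) =
      (⨅ j ∈ A, LinearMap.ker (y j)) ⊓ (⨅ j ∈ B, LinearMap.ker (y j)) := by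
  ext u
  simp only [Submodule.mem_inf, Submodule.mem_iInf, Finset.mem_union]
  constructor
  · intro h; exact ⟨fun j hj => h j (Or.inl hj), fun j hj => h j (Or.inr hj)⟩
  · rintro ⟨h1, h2⟩ j (hj | hj)
    exacts [h1 j hj, h2 j hj]

theorem Aux.iInf_ker_anti {A B : Finset (Fin n)} (h : A ⊆ B) :
    (⨅ j ∈ B, LinearMap.ker (y j)) ≤ (⨅ j ∈ A, LinearMap.ker (y j)) := by
  intro u hu
  rw [Submodule.mem_iInf] at hu ⊢
  intro j
  rw [Submodule.mem_iInf]
  intro hj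
  exact Submodule.mem_iInf _ |>.1 (hu j) (h hj)

theorem Aux.iInf_ker_le_ker {A : Finset (Fin n)} {i : Fin n} (h : i ∈ A) :
    (⨅ j ∈ A, LinearMap.ker (y j)) ≤ LinearMap.ker (y i) := by
  intro u hu
  rw [Submodule.mem_iInf] at hu
  exact Submodule.mem_iInf _ |>.1 (hu i) h

theorem Aux.iInf_ker_le_iff [FiniteDimensional R U] (hy : MIndep Rᵐᵒᵖ m y) (hmn : m ≤ n)
    {A B : Finset (Fin n)} (hA : A.card + 1 ≤ m) :
    (⨅ j ∈ A, LinearMap.ker (y j)) ≤ (⨅ j ∈ B, LinearMap.ker (y j)) ↔ B ⊆ A := by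
  constructor
  · intro h i hiB
    by_contra hiA
    exact Aux.exists_not_in_ker hy hmn hA hiA (le_trans h (Aux.iInf_ker_le_ker hiB))
  · exact Aux.iInf_ker_anti

theorem Aux.iInf_ker_sup [FiniteDimensional R U] (hy : MIndep Rᵐᵒᵖ m y) (hmn : m ≤ n)
    {A B : Finset (Fin n)} (hAB : (A ∪ B).card ≤ m) :
    (⨅ j ∈ A, LinearMap.ker (y j)) ⊔ (⨅ j ∈ B, LinearMap.ker (y j)) =
      (⨅ j ∈ (A ∩ B), LinearMap.ker (y j)) := by
  have hA : A.card ≤ m := le_trans (Finset.card_le_card Finset.subset_union_left) hAB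
  have hB : B.card ≤ m := le_trans (Finset.card_le_card Finset.subset_union_right) hAB
  have hI : (A ∩ B).card ≤ m :=
    le_trans (Finset.card_le_card (Finset.inter_subset_left)) hA
  have hle : (⨅ j ∈ A, LinearMap.ker (y j)) ⊔ (⨅ j ∈ B, LinearMap.ker (y j)) ≤
      (⨅ j ∈ (A ∩ B), LinearMap.ker (y j)) :=
    sup_le (Aux.iInf_ker_anti Finset.inter_subset_left)
      (Aux.iInf_ker_anti Finset.inter_subset_right)
  have hdim := Submodule.finrank_sup_add_finrank_inf_eq
    (⨅ j ∈ A, LinearMap.ker (y j)) (⨅ j ∈ B, LinearMap.ker (y j))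
  rw [← Aux.iInf_ker_union] at hdim
  have h1 := Aux.finrank_iInf_ker (U := U) hy hmn hA
  have h2 := Aux.finrank_iInf_ker (U := U) hy hmn hB
  have h3 := Aux.finrank_iInf_ker (U := U) hy hmn hAB
  have h4 := Aux.finrank_iInf_ker (U := U) hy hmn hI
  apply Submodule.eq_of_le_of_finrank_eq hle
  have hcards := Finset.card_union_add_card_inter A B
  omega

end AuxDual


theorem Aux.firstType_star {R' V' : Type*} [DivisionRing R'] [AddCommGroup V'] [Module R' V']
    [FiniteDimensional R' V'] {n k k' : ℕ} (hk : 1 < k) (hkn : k < n - k)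
    {S₀ : Submodule R' V'} {x : Fin n → V' ⧸ S₀} (hx : MIndep R' (2 * k) x)
    (S : Submodule R' V') (hS : finrank R' ↥S = k' - 1)
    (h2 : 2 ≤ (({P : Grass R' V' k' | ∃ A : Finset (Fin n), A.card = k ∧
        P.1 = Submodule.comap S₀.mkQ (Submodule.span R' (x '' ↑A))}) ∩
        {P : Grass R' V' k' | S ≤ P.1}).ncard) :
    (({P : Grass R' V' k' | ∃ A : Finset (Fin n), A.card = k ∧
        P.1 = Submodule.comap S₀.mkQ (Submodule.span R' (x '' ↑A))}) ∩
        {P : Grass R' V' k' | S ≤ P.1}).ncard = n - k + 1 := by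
  classical
  set J' := {P : Grass R' V' k' | ∃ A : Finset (Fin n), A.card = k ∧
        P.1 = Submodule.comap S₀.mkQ (Submodule.span R' (x '' ↑A))} with hJ'
  set C := {P : Grass R' V' k' | S ≤ P.1} with hC
  have hmn : 2 * k ≤ n := by omega
  have hfin : (J' ∩ C).Finite := by
    by_contra hinf
    rw [Set.Infinite.ncard hinf] at h2
    omega
  obtain ⟨P, Q, hP, hQ, hPQ⟩ := (Set.one_lt_ncard_iff hfin).1 (by omega)
  obtain ⟨A, hAcard, hPA⟩ := hP.1
  obtain ⟨B, hBcard, hQB⟩ := hQ.1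
  set c := finrank R' ↥S₀ with hc
  have hdimA : ∀ T : Finset (Fin n), T.card ≤ 2 * k →
      finrank R' ↥(Submodule.comap S₀.mkQ (Submodule.span R' (x '' ↑T))) = c + T.card := by
    intro T hT
    rw [Aux.finrank_comap_mkQ, Aux.finrank_span_image hx hmn hT]
  have hck : c + k = k' := by
    have h := P.2
    rw [hPA, hdimA A (by omega)] at h
    omega
  have hAB : A ≠ B := fun h => hPQ (Subtype.ext (by rw [hPA, hQB, h]))
  have hABcard : (A ∪ B).card ≤ 2 * k := le_trans (Finset.card_union_le A B) (by omega)
  have hPQinf : P.1 ⊓ Q.1 = Submodule.comap S₀.mkQ (Submodule.span R' (x '' ↑(A ∩ B))) := by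
    rw [hPA, hQB, ← Submodule.comap_inf, Aux.span_inf hx hmn hABcard]
  have hSle : S ≤ P.1 ⊓ Q.1 := le_inf hP.2 hQ.2
  have hDge : k - 1 ≤ (A ∩ B).card := by
    have h1 : finrank R' ↥S ≤ finrank R' ↥(P.1 ⊓ Q.1) := Submodule.finrank_mono hSle
    rw [hS, hPQinf, hdimA _ (le_trans (Finset.card_le_card Finset.inter_subset_left)
      (by omega))] at h1
    omega
  have hDne : (A ∩ B).card ≠ k := by
    intro h
    have h1 : A ∩ B = A := Finset.eq_of_subset_of_card_le Finset.inter_subset_left (by omega)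
    have h2 : A ⊆ B := by rw [← h1]; exact Finset.inter_subset_right
    exact hAB (Finset.eq_of_subset_of_card_le h2 (by omega))
  have hDcard : (A ∩ B).card = k - 1 := by
    have := Finset.card_le_card (Finset.inter_subset_left : A ∩ B ⊆ A)
    omega
  set D := A ∩ B with hD
  have hSD : S = Submodule.comap S₀.mkQ (Submodule.span R' (x '' ↑D)) := by
    apply Submodule.eq_of_le_of_finrank_eq (hPQinf ▸ hSle)
    rw [hS, hdimA D (by omega)]
    omega
  have hPfr : ∀ i : Fin n, i ∉ D → finrank R' ↥(Submodule.comap S₀.mkQ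
      (Submodule.span R' (x '' ↑(insert i D)))) = k' := by
    intro i hi
    rw [hdimA _ (by rw [Finset.card_insert_of_notMem hi]; omega),
      Finset.card_insert_of_notMem hi]
    omega
  set F : Fin n → Grass R' V' k' := fun i =>
    if h : i ∈ D then P
    else ⟨Submodule.comap S₀.mkQ (Submodule.span R' (x '' ↑(insert i D))), hPfr i h⟩
    with hF
  have hset : J' ∩ C = F '' ↑Dᶜ := by
    ext Q'
    constructor
    · rintro ⟨⟨A'', hA''card, hQ'A⟩, hQ'C⟩
      have hDA : D ⊆ A'' := by
        have h1 : Submodule.comap S₀.mkQ (Submodule.span R' (x '' ↑D)) ≤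
            Submodule.comap S₀.mkQ (Submodule.span R' (x '' ↑A'')) := by
          have hh : S ≤ Q'.1 := hQ'C
          rw [hSD] at hh
          rw [hQ'A] at hh
          exact hh
        rw [Aux.comap_mkQ_le_iff] at h1
        exact (Aux.span_le_span_iff hx hmn (by omega)).1 h1
      have hsd : (A'' \ D).card = 1 := by rw [Finset.card_sdiff_of_subset hDA]; omega
      obtain ⟨i, hi⟩ := Finset.card_eq_one.1 hsd
      have hiD : i ∉ D := by
        intro h
        have hh : i ∈ A'' \ D := hi ▸ Finset.mem_singleton_self i
        exact (Finset.mem_sdiff.1 hh).2 h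
      have hins : A'' = insert i D := by
        have hu := Finset.sdiff_union_of_subset hDA
        rw [hi] at hu
        rw [← hu]
        ext j
        simp [Finset.mem_insert, Finset.mem_union, Finset.mem_singleton, or_comm]
      refine ⟨i, by simpa using hiD, ?_⟩
      rw [hF]
      simp only [hiD, ↓reduceDIte]
      exact Subtype.ext (by rw [hQ'A, hins])
    · rintro ⟨i, hi, rfl⟩
      have hiD : i ∉ D := by simpa using hi
      rw [hF]
      simp only [hiD, ↓reduceDIte]
      constructor
      · exact ⟨insert i D, by rw [Finset.card_insert_of_notMem hiD]; omega, rfl⟩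
      · show S ≤ _
        rw [hSD]
        exact Submodule.comap_mono (Submodule.span_mono (Set.image_mono (by
          exact_mod_cast Finset.subset_insert i D)))
  have hinjF : Set.InjOn F ↑Dᶜ := by
    intro i hi j hj hij
    have hiD : i ∉ D := by simpa using hi
    have hjD : j ∉ D := by simpa using hj
    rw [hF] at hij
    simp only [hiD, hjD, ↓reduceDIte] at hij
    have h1 := congrArg Subtype.val hij
    have hcardins : (insert j D).card + 1 ≤ 2 * k := by
      rw [Finset.card_insert_of_notMem hjD]; omega
    have h2 : insert i D ⊆ insert j D := (Aux.span_le_span_iff hx hmn hcardins).1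
      ((Aux.comap_mkQ_le_iff S₀).1 (le_of_eq h1))
    rcases Finset.mem_insert.1 (h2 (Finset.mem_insert_self i D)) with h | h
    · exact h
    · exact absurd h hiD
  rw [hset, Set.ncard_image_of_injOn hinjF, Set.ncard_coe_finset, Finset.card_compl]
  simp only [Fintype.card_fin]
  omega


theorem Aux.firstType_top {R' V' : Type*} [DivisionRing R'] [AddCommGroup V'] [Module R' V']
    [FiniteDimensional R' V'] {n k k' : ℕ} (hk : 1 < k) (hkn : k < n - k)
    {S₀ : Submodule R' V'} {x : Fin n → V' ⧸ S₀} (hx : MIndep R' (2 * k) x)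
    (U : Submodule R' V') (hU : finrank R' ↥U = k' + 1)
    (h2 : 2 ≤ (({P : Grass R' V' k' | ∃ A : Finset (Fin n), A.card = k ∧
        P.1 = Submodule.comap S₀.mkQ (Submodule.span R' (x '' ↑A))}) ∩
        {P : Grass R' V' k' | P.1 ≤ U}).ncard) :
    (({P : Grass R' V' k' | ∃ A : Finset (Fin n), A.card = k ∧
        P.1 = Submodule.comap S₀.mkQ (Submodule.span R' (x '' ↑A))}) ∩
        {P : Grass R' V' k' | P.1 ≤ U}).ncard = k + 1 := by
  classical
  set J' := {P : Grass R' V' k' | ∃ A : Finset (Fin n), A.card = k ∧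
        P.1 = Submodule.comap S₀.mkQ (Submodule.span R' (x '' ↑A))} with hJ'
  set C := {P : Grass R' V' k' | P.1 ≤ U} with hC
  have hmn : 2 * k ≤ n := by omega
  have hfin : (J' ∩ C).Finite := by
    by_contra hinf
    rw [Set.Infinite.ncard hinf] at h2
    omega
  obtain ⟨P, Q, hP, hQ, hPQ⟩ := (Set.one_lt_ncard_iff hfin).1 (by omega)
  obtain ⟨A, hAcard, hPA⟩ := hP.1
  obtain ⟨B, hBcard, hQB⟩ := hQ.1
  set c := finrank R' ↥S₀ with hc
  have hdimA : ∀ T : Finset (Fin n), T.card ≤ 2 * k →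
      finrank R' ↥(Submodule.comap S₀.mkQ (Submodule.span R' (x '' ↑T))) = c + T.card := by
    intro T hT
    rw [Aux.finrank_comap_mkQ, Aux.finrank_span_image hx hmn hT]
  have hck : c + k = k' := by
    have h := P.2
    rw [hPA, hdimA A (by omega)] at h
    omega
  have hAB : A ≠ B := fun h => hPQ (Subtype.ext (by rw [hPA, hQB, h]))
  have hABcard : (A ∪ B).card ≤ 2 * k := le_trans (Finset.card_union_le A B) (by omega)
  have hPQinf : P.1 ⊓ Q.1 = Submodule.comap S₀.mkQ (Submodule.span R' (x '' ↑(A ∩ B))) := by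
    rw [hPA, hQB, ← Submodule.comap_inf, Aux.span_inf hx hmn hABcard]
  have hPQle : P.1 ⊔ Q.1 ≤ U := sup_le hP.2 hQ.2
  have hsupinf := Submodule.finrank_sup_add_finrank_inf_eq P.1 Q.1
  rw [P.2, Q.2, hPQinf, hdimA _ (le_trans (Finset.card_le_card
    (Finset.inter_subset_left : A ∩ B ⊆ A)) (by omega))] at hsupinf
  have hsuple : finrank R' ↥(P.1 ⊔ Q.1) ≤ k' + 1 := by
    rw [← hU]
    exact Submodule.finrank_mono hPQle
  have hDge : k - 1 ≤ (A ∩ B).card := by omega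
  have hDne : (A ∩ B).card ≠ k := by
    intro h
    have h1 : A ∩ B = A := Finset.eq_of_subset_of_card_le Finset.inter_subset_left (by omega)
    have h2' : A ⊆ B := by rw [← h1]; exact Finset.inter_subset_right
    exact hAB (Finset.eq_of_subset_of_card_le h2' (by omega))
  have hDcard : (A ∩ B).card = k - 1 := by
    have := Finset.card_le_card (Finset.inter_subset_left : A ∩ B ⊆ A)
    omega
  have hEcard : (A ∪ B).card = k + 1 := by
    have := Finset.card_union_add_card_inter A B
    omega
  have hsupr : finrank R' ↥(P.1 ⊔ Q.1) = k' + 1 := by omega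
  have hPQU : P.1 ⊔ Q.1 = U :=
    Submodule.eq_of_le_of_finrank_eq hPQle (by rw [hsupr, hU])
  set E := A ∪ B with hE
  have hUE : U = Submodule.comap S₀.mkQ (Submodule.span R' (x '' ↑E)) := by
    rw [← hPQU]
    apply Submodule.eq_of_le_of_finrank_eq
    · apply sup_le
      · rw [hPA]
        exact Submodule.comap_mono (Submodule.span_mono (Set.image_mono
          (by exact_mod_cast Finset.subset_union_left)))
      · rw [hQB]
        exact Submodule.comap_mono (Submodule.span_mono (Set.image_mono
          (by exact_mod_cast Finset.subset_union_right)))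
    · rw [hsupr, hdimA E (by omega), hEcard]
      omega
  have hPfr : ∀ i : Fin n, i ∈ E → finrank R' ↥(Submodule.comap S₀.mkQ
      (Submodule.span R' (x '' ↑(E.erase i)))) = k' := by
    intro i hi
    rw [hdimA _ (by rw [Finset.card_erase_of_mem hi]; omega),
      Finset.card_erase_of_mem hi, hEcard]
    omega
  set F : Fin n → Grass R' V' k' := fun i =>
    if h : i ∈ E then
      ⟨Submodule.comap S₀.mkQ (Submodule.span R' (x '' ↑(E.erase i))), hPfr i h⟩
    else P
    with hF
  have hset : J' ∩ C = F '' ↑E := by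
    ext Q'
    constructor
    · rintro ⟨⟨A'', hA''card, hQ'A⟩, hQ'C⟩
      have hsub : A'' ⊆ E := by
        have h1 : Submodule.comap S₀.mkQ (Submodule.span R' (x '' ↑A'')) ≤
            Submodule.comap S₀.mkQ (Submodule.span R' (x '' ↑E)) := by
          have hh : Q'.1 ≤ U := hQ'C
          rw [hQ'A, hUE] at hh
          exact hh
        rw [Aux.comap_mkQ_le_iff] at h1
        exact (Aux.span_le_span_iff hx hmn (by omega)).1 h1
      have hsd : (E \ A'').card = 1 := by rw [Finset.card_sdiff_of_subset hsub]; omega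
      obtain ⟨i, hi⟩ := Finset.card_eq_one.1 hsd
      have hiE : i ∈ E := by
        have hh : i ∈ E \ A'' := hi ▸ Finset.mem_singleton_self i
        exact (Finset.mem_sdiff.1 hh).1
      have hiA : i ∉ A'' := by
        have hh : i ∈ E \ A'' := hi ▸ Finset.mem_singleton_self i
        exact (Finset.mem_sdiff.1 hh).2
      have hins : A'' = E.erase i := by
        ext j
        rw [Finset.mem_erase]
        constructor
        · intro hj
          exact ⟨fun h => hiA (h ▸ hj), hsub hj⟩
        · rintro ⟨hji, hjE⟩
          by_contra hjA
          have : j ∈ E \ A'' := Finset.mem_sdiff.2 ⟨hjE, hjA⟩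
          rw [hi] at this
          exact hji (Finset.mem_singleton.1 this)
      refine ⟨i, by simpa using hiE, ?_⟩
      rw [hF]
      simp only [hiE, ↓reduceDIte]
      exact Subtype.ext (by rw [hQ'A, hins])
    · rintro ⟨i, hi, rfl⟩
      have hiE : i ∈ E := by simpa using hi
      rw [hF]
      simp only [hiE, ↓reduceDIte]
      constructor
      · exact ⟨E.erase i, by rw [Finset.card_erase_of_mem hiE, hEcard]; omega, rfl⟩
      · show Submodule.comap S₀.mkQ (Submodule.span R' (x '' ↑(E.erase i))) ≤ U
        rw [hUE]
        exact Submodule.comap_mono (Submodule.span_mono (Set.image_mono (by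
          exact_mod_cast Finset.erase_subset i E)))
  have hinjF : Set.InjOn F ↑E := by
    intro i hi j hj hij
    have hiE : i ∈ E := by simpa using hi
    have hjE : j ∈ E := by simpa using hj
    rw [hF] at hij
    simp only [hiE, hjE, ↓reduceDIte] at hij
    have h1 := congrArg Subtype.val hij
    by_contra hne
    have hub : (E.erase j).card + 1 ≤ 2 * k := by
      rw [Finset.card_erase_of_mem hjE, hEcard]; omega
    have hub' : (E.erase i).card + 1 ≤ 2 * k := by
      rw [Finset.card_erase_of_mem hiE, hEcard]; omega
    have h2 : E.erase i = E.erase j :=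
      le_antisymm
        ((Aux.span_le_span_iff hx hmn hub).1 ((Aux.comap_mkQ_le_iff S₀).1 (le_of_eq h1)))
        ((Aux.span_le_span_iff hx hmn hub').1 ((Aux.comap_mkQ_le_iff S₀).1 (le_of_eq h1.symm)))
    have : j ∈ E.erase i := Finset.mem_erase.2 ⟨fun h => hne (h ▸ rfl), hjE⟩
    rw [h2] at this
    exact (Finset.mem_erase.1 this).1 rfl
  rw [hset, Set.ncard_image_of_injOn hinjF, Set.ncard_coe_finset, hEcard]


theorem Aux.secondType_star {R' V' : Type*} [DivisionRing R'] [AddCommGroup V'] [Module R' V']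
    [FiniteDimensional R' V'] {n k k' : ℕ} (hk : 1 < k) (hkn : k < n - k)
    {U₀ : Submodule R' V'} {y : Fin n → (↥U₀ →ₗ[R'] R')} (hy : MIndep R'ᵐᵒᵖ (2 * k) y)
    (S : Submodule R' V') (hS : finrank R' ↥S = k' - 1)
    (h2 : 2 ≤ (({P : Grass R' V' k' | ∃ A : Finset (Fin n), A.card = k ∧
        P.1 = Submodule.map U₀.subtype (⨅ i ∈ A, LinearMap.ker (y i))}) ∩
        {P : Grass R' V' k' | S ≤ P.1}).ncard) :
    (({P : Grass R' V' k' | ∃ A : Finset (Fin n), A.card = k ∧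
        P.1 = Submodule.map U₀.subtype (⨅ i ∈ A, LinearMap.ker (y i))}) ∩
        {P : Grass R' V' k' | S ≤ P.1}).ncard = k + 1 := by
  classical
  set J' := {P : Grass R' V' k' | ∃ A : Finset (Fin n), A.card = k ∧
        P.1 = Submodule.map U₀.subtype (⨅ i ∈ A, LinearMap.ker (y i))} with hJ'
  set C := {P : Grass R' V' k' | S ≤ P.1} with hC
  have hmn : 2 * k ≤ n := by omega
  have hfin : (J' ∩ C).Finite := by
    by_contra hinf
    rw [Set.Infinite.ncard hinf] at h2
    omega
  obtain ⟨P, Q, hP, hQ, hPQ⟩ := (Set.one_lt_ncard_iff hfin).1 (by omega)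
  obtain ⟨A, hAcard, hPA⟩ := hP.1
  obtain ⟨B, hBcard, hQB⟩ := hQ.1
  set N := finrank R' ↥U₀ with hN
  have hdim : ∀ T : Finset (Fin n), T.card ≤ 2 * k →
      finrank R' ↥(Submodule.map U₀.subtype (⨅ j ∈ T, LinearMap.ker (y j))) + T.card = N := by
    intro T hT
    rw [← (Submodule.equivMapOfInjective U₀.subtype (Submodule.injective_subtype U₀)
      (⨅ j ∈ T, LinearMap.ker (y j))).finrank_eq]
    exact Aux.finrank_iInf_ker hy hmn hT
  have hck : k' + k = N := by
    have h := P.2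
    have h1 := hdim A (by omega)
    rw [hPA] at h
    omega
  have hAB : A ≠ B := fun h => hPQ (Subtype.ext (by rw [hPA, hQB, h]))
  have hABcard : (A ∪ B).card ≤ 2 * k := le_trans (Finset.card_union_le A B) (by omega)
  have hPQinf : P.1 ⊓ Q.1 =
      Submodule.map U₀.subtype (⨅ j ∈ (A ∪ B), LinearMap.ker (y j)) := by
    rw [hPA, hQB, ← Submodule.map_inf _ (Submodule.injective_subtype U₀), ← Aux.iInf_ker_union]
  have hSle : S ≤ P.1 ⊓ Q.1 := le_inf hP.2 hQ.2
  have hEub : (A ∪ B).card ≤ k + 1 := by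
    have h1 : finrank R' ↥S ≤ finrank R' ↥(P.1 ⊓ Q.1) := Submodule.finrank_mono hSle
    have h2' := hdim (A ∪ B) hABcard
    rw [hS, hPQinf] at h1
    omega
  have hEne : (A ∪ B).card ≠ k := by
    intro h
    have h1 : A = A ∪ B := Finset.eq_of_subset_of_card_le Finset.subset_union_left (by omega)
    have h2' : B ⊆ A := by
      intro b hb
      rw [h1]
      exact Finset.mem_union_right _ hb
    exact hAB (Finset.eq_of_subset_of_card_le h2' (by omega)).symm
  have hEcard : (A ∪ B).card = k + 1 := by
    have := Finset.card_le_card (Finset.subset_union_left : A ⊆ A ∪ B)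
    omega
  set E := A ∪ B with hE
  have hSE : S = Submodule.map U₀.subtype (⨅ j ∈ E, LinearMap.ker (y j)) := by
    apply Submodule.eq_of_le_of_finrank_eq (hPQinf ▸ hSle)
    have := hdim E (by omega)
    rw [hS]
    omega
  have hPfr : ∀ i : Fin n, i ∈ E → finrank R' ↥(Submodule.map U₀.subtype
      (⨅ j ∈ E.erase i, LinearMap.ker (y j))) = k' := by
    intro i hi
    have := hdim (E.erase i) (by rw [Finset.card_erase_of_mem hi]; omega)
    rw [Finset.card_erase_of_mem hi, hEcard] at this
    omega
  set F : Fin n → Grass R' V' k' := fun i =>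
    if h : i ∈ E then
      ⟨Submodule.map U₀.subtype (⨅ j ∈ E.erase i, LinearMap.ker (y j)), hPfr i h⟩
    else P
    with hF
  have hset : J' ∩ C = F '' ↑E := by
    ext Q'
    constructor
    · rintro ⟨⟨A'', hA''card, hQ'A⟩, hQ'C⟩
      have hsub : A'' ⊆ E := by
        have h1 : Submodule.map U₀.subtype (⨅ j ∈ E, LinearMap.ker (y j)) ≤
            Submodule.map U₀.subtype (⨅ j ∈ A'', LinearMap.ker (y j)) := by
          have hh : S ≤ Q'.1 := hQ'C
          rw [hSE, hQ'A] at hh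
          exact hh
        rw [Submodule.map_le_map_iff_of_injective (Submodule.injective_subtype U₀)] at h1
        exact (Aux.iInf_ker_le_iff hy hmn (by omega)).1 h1
      have hsd : (E \ A'').card = 1 := by rw [Finset.card_sdiff_of_subset hsub]; omega
      obtain ⟨i, hi⟩ := Finset.card_eq_one.1 hsd
      have hiE : i ∈ E := by
        have hh : i ∈ E \ A'' := hi ▸ Finset.mem_singleton_self i
        exact (Finset.mem_sdiff.1 hh).1
      have hiA : i ∉ A'' := by
        have hh : i ∈ E \ A'' := hi ▸ Finset.mem_singleton_self i
        exact (Finset.mem_sdiff.1 hh).2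
      have hins : A'' = E.erase i := by
        ext j
        rw [Finset.mem_erase]
        constructor
        · intro hj
          exact ⟨fun h => hiA (h ▸ hj), hsub hj⟩
        · rintro ⟨hji, hjE⟩
          by_contra hjA
          have : j ∈ E \ A'' := Finset.mem_sdiff.2 ⟨hjE, hjA⟩
          rw [hi] at this
          exact hji (Finset.mem_singleton.1 this)
      refine ⟨i, by simpa using hiE, ?_⟩
      rw [hF]
      simp only [hiE, ↓reduceDIte]
      exact Subtype.ext (by rw [hQ'A, hins])
    · rintro ⟨i, hi, rfl⟩
      have hiE : i ∈ E := by simpa using hi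
      rw [hF]
      simp only [hiE, ↓reduceDIte]
      constructor
      · exact ⟨E.erase i, by rw [Finset.card_erase_of_mem hiE, hEcard]; omega, rfl⟩
      · show S ≤ _
        rw [hSE]
        exact Submodule.map_mono (Aux.iInf_ker_anti (Finset.erase_subset i E))
  have hinjF : Set.InjOn F ↑E := by
    intro i hi j hj hij
    have hiE : i ∈ E := by simpa using hi
    have hjE : j ∈ E := by simpa using hj
    rw [hF] at hij
    simp only [hiE, hjE, ↓reduceDIte] at hij
    have h1 := congrArg Subtype.val hij
    by_contra hne
    have hub : (E.erase i).card + 1 ≤ 2 * k := by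
      rw [Finset.card_erase_of_mem hiE, hEcard]; omega
    have hub' : (E.erase j).card + 1 ≤ 2 * k := by
      rw [Finset.card_erase_of_mem hjE, hEcard]; omega
    have h2' : E.erase i = E.erase j :=
      le_antisymm
        ((Aux.iInf_ker_le_iff hy hmn hub').1
          ((Submodule.map_le_map_iff_of_injective (Submodule.injective_subtype U₀) _ _).1
            (le_of_eq h1.symm)))
        ((Aux.iInf_ker_le_iff hy hmn hub).1
          ((Submodule.map_le_map_iff_of_injective (Submodule.injective_subtype U₀) _ _).1
            (le_of_eq h1)))
    have : j ∈ E.erase i := Finset.mem_erase.2 ⟨fun h => hne (h ▸ rfl), hjE⟩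
    rw [h2'] at this
    exact (Finset.mem_erase.1 this).1 rfl
  rw [hset, Set.ncard_image_of_injOn hinjF, Set.ncard_coe_finset, hEcard]

theorem Aux.secondType_top {R' V' : Type*} [DivisionRing R'] [AddCommGroup V'] [Module R' V']
    [FiniteDimensional R' V'] {n k k' : ℕ} (hk : 1 < k) (hkn : k < n - k)
    {U₀ : Submodule R' V'} {y : Fin n → (↥U₀ →ₗ[R'] R')} (hy : MIndep R'ᵐᵒᵖ (2 * k) y)
    (U : Submodule R' V') (hU : finrank R' ↥U = k' + 1)
    (h2 : 2 ≤ (({P : Grass R' V' k' | ∃ A : Finset (Fin n), A.card = k ∧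
        P.1 = Submodule.map U₀.subtype (⨅ i ∈ A, LinearMap.ker (y i))}) ∩
        {P : Grass R' V' k' | P.1 ≤ U}).ncard) :
    (({P : Grass R' V' k' | ∃ A : Finset (Fin n), A.card = k ∧
        P.1 = Submodule.map U₀.subtype (⨅ i ∈ A, LinearMap.ker (y i))}) ∩
        {P : Grass R' V' k' | P.1 ≤ U}).ncard = n - k + 1 := by
  classical
  set J' := {P : Grass R' V' k' | ∃ A : Finset (Fin n), A.card = k ∧
        P.1 = Submodule.map U₀.subtype (⨅ i ∈ A, LinearMap.ker (y i))} with hJ'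
  set C := {P : Grass R' V' k' | P.1 ≤ U} with hC
  have hmn : 2 * k ≤ n := by omega
  have hfin : (J' ∩ C).Finite := by
    by_contra hinf
    rw [Set.Infinite.ncard hinf] at h2
    omega
  obtain ⟨P, Q, hP, hQ, hPQ⟩ := (Set.one_lt_ncard_iff hfin).1 (by omega)
  obtain ⟨A, hAcard, hPA⟩ := hP.1
  obtain ⟨B, hBcard, hQB⟩ := hQ.1
  set N := finrank R' ↥U₀ with hN
  have hdim : ∀ T : Finset (Fin n), T.card ≤ 2 * k →
      finrank R' ↥(Submodule.map U₀.subtype (⨅ j ∈ T, LinearMap.ker (y j))) + T.card = N := by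
    intro T hT
    rw [← (Submodule.equivMapOfInjective U₀.subtype (Submodule.injective_subtype U₀)
      (⨅ j ∈ T, LinearMap.ker (y j))).finrank_eq]
    exact Aux.finrank_iInf_ker hy hmn hT
  have hck : k' + k = N := by
    have h := P.2
    have h1 := hdim A (by omega)
    rw [hPA] at h
    omega
  have hAB : A ≠ B := fun h => hPQ (Subtype.ext (by rw [hPA, hQB, h]))
  have hABcard : (A ∪ B).card ≤ 2 * k := le_trans (Finset.card_union_le A B) (by omega)
  have hPQsup : P.1 ⊔ Q.1 =
      Submodule.map U₀.subtype (⨅ j ∈ (A ∩ B), LinearMap.ker (y j)) := by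
    rw [hPA, hQB, ← Submodule.map_sup, Aux.iInf_ker_sup hy hmn hABcard]
  have hSle : P.1 ⊔ Q.1 ≤ U := sup_le hP.2 hQ.2
  have hIcard' : (A ∩ B).card ≤ 2 * k :=
    le_trans (Finset.card_le_card (Finset.inter_subset_left : A ∩ B ⊆ A)) (by omega)
  have hDge : k - 1 ≤ (A ∩ B).card := by
    have h1 : finrank R' ↥(P.1 ⊔ Q.1) ≤ finrank R' ↥U := Submodule.finrank_mono hSle
    have h2' := hdim (A ∩ B) hIcard'
    rw [hU, hPQsup] at h1
    omega
  have hDne : (A ∩ B).card ≠ k := by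
    intro h
    have h1 : A ∩ B = A := Finset.eq_of_subset_of_card_le Finset.inter_subset_left (by omega)
    have h2' : A ⊆ B := by rw [← h1]; exact Finset.inter_subset_right
    exact hAB (Finset.eq_of_subset_of_card_le h2' (by omega))
  have hDcard : (A ∩ B).card = k - 1 := by
    have := Finset.card_le_card (Finset.inter_subset_left : A ∩ B ⊆ A)
    omega
  set D := A ∩ B with hD
  have hUD : U = Submodule.map U₀.subtype (⨅ j ∈ D, LinearMap.ker (y j)) := by
    refine (Submodule.eq_of_le_of_finrank_eq (hPQsup ▸ hSle) ?_).symm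
    have := hdim D (by omega)
    rw [hU]
    omega
  have hPfr : ∀ i : Fin n, i ∉ D → finrank R' ↥(Submodule.map U₀.subtype
      (⨅ j ∈ insert i D, LinearMap.ker (y j))) = k' := by
    intro i hi
    have := hdim (insert i D) (by rw [Finset.card_insert_of_notMem hi]; omega)
    rw [Finset.card_insert_of_notMem hi, hDcard] at this
    omega
  set F : Fin n → Grass R' V' k' := fun i =>
    if h : i ∈ D then P
    else ⟨Submodule.map U₀.subtype (⨅ j ∈ insert i D, LinearMap.ker (y j)), hPfr i h⟩
    with hF
  have hset : J' ∩ C = F '' ↑Dᶜ := by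
    ext Q'
    constructor
    · rintro ⟨⟨A'', hA''card, hQ'A⟩, hQ'C⟩
      have hDA : D ⊆ A'' := by
        have h1 : Submodule.map U₀.subtype (⨅ j ∈ A'', LinearMap.ker (y j)) ≤
            Submodule.map U₀.subtype (⨅ j ∈ D, LinearMap.ker (y j)) := by
          have hh : Q'.1 ≤ U := hQ'C
          rw [hQ'A, hUD] at hh
          exact hh
        rw [Submodule.map_le_map_iff_of_injective (Submodule.injective_subtype U₀)] at h1
        exact (Aux.iInf_ker_le_iff hy hmn (by omega)).1 h1
      have hsd : (A'' \ D).card = 1 := by rw [Finset.card_sdiff_of_subset hDA]; omega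
      obtain ⟨i, hi⟩ := Finset.card_eq_one.1 hsd
      have hiD : i ∉ D := by
        intro h
        have hh : i ∈ A'' \ D := hi ▸ Finset.mem_singleton_self i
        exact (Finset.mem_sdiff.1 hh).2 h
      have hins : A'' = insert i D := by
        have hu := Finset.sdiff_union_of_subset hDA
        rw [hi] at hu
        rw [← hu]
        ext j
        simp [Finset.mem_insert, Finset.mem_union, Finset.mem_singleton, or_comm]
      refine ⟨i, by simpa using hiD, ?_⟩
      rw [hF]
      simp only [hiD, ↓reduceDIte]
      exact Subtype.ext (by rw [hQ'A, hins])
    · rintro ⟨i, hi, rfl⟩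
      have hiD : i ∉ D := by simpa using hi
      rw [hF]
      simp only [hiD, ↓reduceDIte]
      constructor
      · exact ⟨insert i D, by rw [Finset.card_insert_of_notMem hiD]; omega, rfl⟩
      · show Submodule.map U₀.subtype (⨅ j ∈ insert i D, LinearMap.ker (y j)) ≤ U
        rw [hUD]
        exact Submodule.map_mono (Aux.iInf_ker_anti (Finset.subset_insert i D))
  have hinjF : Set.InjOn F ↑Dᶜ := by
    intro i hi j hj hij
    have hiD : i ∉ D := by simpa using hi
    have hjD : j ∉ D := by simpa using hj
    rw [hF] at hij
    simp only [hiD, hjD, ↓reduceDIte] at hij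
    have h1 := congrArg Subtype.val hij
    have hcardins : (insert i D).card + 1 ≤ 2 * k := by
      rw [Finset.card_insert_of_notMem hiD]; omega
    have h2' : insert j D ⊆ insert i D := (Aux.iInf_ker_le_iff hy hmn hcardins).1
      ((Submodule.map_le_map_iff_of_injective (Submodule.injective_subtype U₀) _ _).1
        (le_of_eq h1))
    rcases Finset.mem_insert.1 (h2' (Finset.mem_insert_self j D)) with h | h
    · exact h.symm
    · exact absurd h hjD
  rw [hset, Set.ncard_image_of_injOn hinjF, Set.ncard_coe_finset, Finset.card_compl]
  simp only [Fintype.card_fin]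
  omega

/-- Let `J` be a `J(n,k)`-subset of `G_{k'}(V')` with `1 < k < n - k`.
If `J` is of first type then its stars consist of `n-k+1` elements and its tops of `k+1`
elements; if `J` is of second type then its stars consist of `k+1` elements and its tops
of `n-k+1` elements. Here a star (resp. top) of `Γ_{k'}(V')` is the set of `k'`-dimensional
subspaces containing a fixed `(k'-1)`-dimensional subspace (resp. contained in a fixed
`(k'+1)`-dimensional subspace). -/
theorem star_top_card_of_type
    {R' V' : Type*} [DivisionRing R'] [AddCommGroup V'] [Module R' V']
    [FiniteDimensional R' V'] (n n' k k' : ℕ) (hV' : Module.finrank R' V' = n')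
    (hk : 1 < k) (hkn : k < n - k)
    (J : Set (Grass R' V' k')) (hJ : IsJSubset R' V' n k k' J) :
    (IsFirstType R' V' n k k' J →
      (∀ S : Submodule R' V', Module.finrank R' ↥S = k' - 1 →
        2 ≤ (J ∩ {P : Grass R' V' k' | S ≤ P.1}).ncard →
        (J ∩ {P : Grass R' V' k' | S ≤ P.1}).ncard = n - k + 1) ∧
      (∀ U : Submodule R' V', Module.finrank R' ↥U = k' + 1 →
        2 ≤ (J ∩ {P : Grass R' V' k' | P.1 ≤ U}).ncard →
        (J ∩ {P : Grass R' V' k' | P.1 ≤ U}).ncard = k + 1)) ∧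
    (IsSecondType R' V' n k k' J →
      (∀ S : Submodule R' V', Module.finrank R' ↥S = k' - 1 →
        2 ≤ (J ∩ {P : Grass R' V' k' | S ≤ P.1}).ncard →
        (J ∩ {P : Grass R' V' k' | S ≤ P.1}).ncard = k + 1) ∧
      (∀ U : Submodule R' V', Module.finrank R' ↥U = k' + 1 →
        2 ≤ (J ∩ {P : Grass R' V' k' | P.1 ≤ U}).ncard →
        (J ∩ {P : Grass R' V' k' | P.1 ≤ U}).ncard = n - k + 1)) := by
  constructor
  · rintro ⟨S₀, hS₀, x, hxinj, hx, rfl⟩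
    exact ⟨fun S hS h2 => Aux.firstType_star hk hkn hx S hS h2,
      fun U hU h2 => Aux.firstType_top hk hkn hx U hU h2⟩
  · rintro ⟨U₀, hU₀, y, hyinj, hy, rfl⟩
    exact ⟨fun S hS h2 => Aux.secondType_star hk hkn hy S hS h2,
      fun U hU h2 => Aux.secondType_top hk hkn hy U hU h2⟩
end

section
/- Let k ≥ 2, n ≥ 2k, and let X = {x_1,…,x_n} be a (2k)-independent subset of a vector space W over a division ring, with dim W ≥ 2k. Then every inexact subset of J_k(X) is contained in a special subset of J_k(X). -/
open Submodule Set Function Module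

/-- The special subset `J(+i,+j) ∪ J(-i)` of `J = J_k(X)`: all members of `J` which either
contain both `x i` and `x j`, or do not contain `x i`. -/
def SpecialSubset (R : Type*) {W : Type*} [DivisionRing R] [AddCommGroup W] [Module R W]
    {n : ℕ} (k : ℕ) (x : Fin n → W) (i j : Fin n) : Set (Submodule R W) :=
  {P | P ∈ JkSet R k x ∧ ((x i ∈ P ∧ x j ∈ P) ∨ x i ∉ P)}

/-- A subset `Z` of `J = J_k(X)` is inexact if there is a `(2k)`-independent `n`-element
family `y` with `J_k(Y) ≠ J` and `Z ⊆ J_k(Y)`. -/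
def InexactIn (R : Type*) {W : Type*} [DivisionRing R] [AddCommGroup W] [Module R W]
    (n k : ℕ) (J : Set (Submodule R W)) (Z : Set (Submodule R W)) : Prop :=
  ∃ y : Fin n → W, Function.Injective y ∧ MIndep R (2 * k) y ∧
    JkSet R k y ≠ J ∧ Z ⊆ JkSet R k y

section Aux
variable {K W : Type*} [DivisionRing K] [AddCommGroup W] [Module K W] {n k : ℕ}

lemma image_restrict {α β : Type*} (x : α → β) (S C : Set α) (h : C ⊆ S) :
    (fun a : S => x (a : α)) '' {a : S | (a : α) ∈ C} = x '' C := by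
  ext w
  constructor
  · rintro ⟨⟨a, haS⟩, haC, rfl⟩; exact ⟨a, haC, rfl⟩
  · rintro ⟨a, haC, rfl⟩; exact ⟨⟨a, h haC⟩, haC, rfl⟩

lemma mindep_sub {x : Fin n → W} (hx : MIndep K (2 * k) x) (hn : 2 * k ≤ n)
    (A : Finset (Fin n)) (hA : A.card ≤ 2 * k) :
    LinearIndependent K (fun i : A => x (i : Fin n)) := by
  obtain ⟨B, hAB, -, hB⟩ := Finset.exists_subsuperset_card_eq (Finset.subset_univ A) hA
    (by simpa using hn)
  refine (hx B hB).comp (fun a : A => (⟨a.1, hAB a.2⟩ : B)) ?_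
  intro a b hab
  simp only [Subtype.mk.injEq] at hab
  exact Subtype.ext hab

lemma mindep_set {x : Fin n → W} (hx : MIndep K (2 * k) x) (hn : 2 * k ≤ n)
    (A : Finset (Fin n)) (hA : A.card ≤ 2 * k) :
    LinearIndependent K (fun a : (↑A : Set (Fin n)) => x (a : Fin n)) :=
  mindep_sub hx hn A hA

lemma mem_span_iff {x : Fin n → W} (hx : MIndep K (2 * k) x) (hn : 2 * k ≤ n)
    (A : Finset (Fin n)) (hA : A.card + 1 ≤ 2 * k) (i : Fin n) :
    x i ∈ span K (x '' ↑A) ↔ i ∈ A := by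
  constructor
  · intro h
    by_contra hi
    have hind := mindep_set hx hn (insert i A)
      (by rw [Finset.card_insert_of_notMem hi]; omega)
    have hx0 : (⟨i, by simp⟩ : (↑(insert i A) : Set (Fin n))) ∉
        {a : (↑(insert i A) : Set (Fin n)) | (a : Fin n) ∈ (↑A : Set (Fin n))} := by
      simpa using hi
    have := hind.notMem_span_image hx0
    rw [image_restrict x _ _ (by intro a ha; simp [Finset.mem_coe.mp ha])] at this
    exact this h
  · intro h
    exact subset_span ⟨i, by simpa using h⟩

lemma span_inf {x : Fin n → W} (hx : MIndep K (2 * k) x) (hn : 2 * k ≤ n)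
    {A B : Finset (Fin n)} (hA : A.card ≤ k) (hB : B.card ≤ k) :
    span K (x '' ↑A) ⊓ span K (x '' ↑B) ≤ span K (x '' ↑(A ∩ B)) := by
  rintro v ⟨hvA, hvB⟩
  have hU := mindep_set hx hn (A ∪ B)
    (le_trans (Finset.card_union_le A B) (by omega))
  set S : Set (Fin n) := ↑(A ∪ B) with hS
  have hdisj : Disjoint ({a : S | (a : Fin n) ∈ (↑(A \ B) : Set (Fin n))})
      ({a : S | (a : Fin n) ∈ (↑B : Set (Fin n))}) := by
    rw [Set.disjoint_left]
    rintro a ha hb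
    simp only [mem_setOf_eq, Finset.coe_sdiff, Set.mem_diff, Finset.mem_coe] at ha hb
    exact ha.2 hb
  have hd := hU.disjoint_span_image hdisj
  have hsub1 : (↑(A \ B) : Set (Fin n)) ⊆ S := by
    intro a ha
    simp only [Finset.coe_sdiff, Set.mem_diff, Finset.mem_coe] at ha
    simp [hS, Finset.mem_union, ha.1]
  have hsub2 : (↑B : Set (Fin n)) ⊆ S := by
    intro a ha
    simp only [Finset.mem_coe] at ha
    simp [hS, Finset.mem_union, ha]
  rw [image_restrict x S _ hsub1, image_restrict x S _ hsub2] at hd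
  have hsplit : A ∩ B ∪ A \ B = A := by ext a; simp; tauto
  have hvA' : v ∈ span K (x '' ↑(A ∩ B)) ⊔ span K (x '' ↑(A \ B)) := by
    rw [← span_union, ← Set.image_union, ← Finset.coe_union, hsplit]; exact hvA
  obtain ⟨u, hu, w, hw, huw⟩ := Submodule.mem_sup.mp hvA'
  have hwB : w ∈ span K (x '' ↑B) := by
    have huB : u ∈ span K (x '' ↑B) :=
      span_mono (Set.image_mono (by exact_mod_cast Finset.inter_subset_right)) hu
    have : w = v - u := by rw [← huw]; abel
    rw [this]; exact sub_mem hvB huB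
  have hw0 : w = 0 := (Submodule.disjoint_def.mp hd) w hw hwB
  rw [← huw, hw0, add_zero]; exact hu

end Aux

/-- Every inexact subset of `J_k(X)` is contained in a special subset. -/
theorem inexact_subset_special
    {K W : Type*} [DivisionRing K] [AddCommGroup W] [Module K W]
    (n k : ℕ) (hk : 2 ≤ k) (hn : 2 * k ≤ n)
    (hW : ((2 * k : ℕ) : Cardinal) ≤ Module.rank K W)
    (x : Fin n → W) (hxinj : Function.Injective x) (hx : MIndep K (2 * k) x)
    (Z : Set (Submodule K W)) (hZJ : Z ⊆ JkSet K k x)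
    (hZ : InexactIn K n k (JkSet K k x) Z) :
    ∃ i j : Fin n, i ≠ j ∧ Z ⊆ SpecialSubset K k x i j := by
  by_contra hcon
  push_neg at hcon
  obtain ⟨y, hyinj, hy, hne, hZY⟩ := hZ
  have key : ∀ i j : Fin n, i ≠ j → ∃ P ∈ Z, x i ∈ P ∧ x j ∉ P := by
    intro i j hij
    obtain ⟨P, hPZ, hPS⟩ := Set.not_subset.mp (hcon i j hij)
    have h2 : ¬((x i ∈ P ∧ x j ∈ P) ∨ x i ∉ P) := fun h => hPS ⟨hZJ hPZ, h⟩
    push_neg at h2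
    exact ⟨P, hPZ, h2.2, h2.1 h2.2⟩
  have exj : ∀ i : Fin n, ∃ j : Fin n, i ≠ j := by
    intro i
    have h4 : 4 ≤ n := by omega
    by_cases h : i = ⟨0, by omega⟩
    · exact ⟨⟨1, by omega⟩, by rw [h]; simp [Fin.ext_iff]⟩
    · exact ⟨⟨0, by omega⟩, h⟩
  have hx0 : ∀ i, x i ≠ 0 := by
    intro i
    have h := mindep_sub hx hn {i} (by simp; omega)
    exact LinearIndependent.ne_zero
      (⟨i, Finset.mem_singleton_self i⟩ : ({i} : Finset (Fin n))) h
  have hy0 : ∀ b, y b ≠ 0 := by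
    intro b
    have h := mindep_sub hy hn {b} (by simp; omega)
    exact LinearIndependent.ne_zero
      (⟨b, Finset.mem_singleton_self b⟩ : ({b} : Finset (Fin n))) h
  -- x-side: anything lying in all members of `Z` containing `x i` is in the line `⟨x i⟩`.
  have inter_x : ∀ (i : Fin n) (v : W), (∀ P ∈ Z, x i ∈ P → v ∈ P) →
      v ∈ (span K {x i} : Submodule K W) := by
    intro i v hv
    have hAll : ∀ j : Fin n, ∃ A : Finset (Fin n), A.card = k ∧ i ∈ A ∧ (j ≠ i → j ∉ A)
        ∧ v ∈ span K (x '' ↑A) := by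
      intro j
      by_cases hij : j = i
      · obtain ⟨j0, hj0⟩ := exj i
        obtain ⟨P, hPZ, hPi, hPj⟩ := key i j0 hj0
        obtain ⟨A, hAc, rfl⟩ := hZJ hPZ
        exact ⟨A, hAc, (mem_span_iff hx hn A (by omega) i).mp hPi,
          fun h => absurd hij h, hv _ hPZ hPi⟩
      · obtain ⟨P, hPZ, hPi, hPj⟩ := key i j (Ne.symm hij)
        obtain ⟨A, hAc, rfl⟩ := hZJ hPZ
        refine ⟨A, hAc, (mem_span_iff hx hn A (by omega) i).mp hPi,
          fun _ hjA => hPj ?_, hv _ hPZ hPi⟩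
        exact (mem_span_iff hx hn A (by omega) j).mpr hjA
    choose f hfc hfi hfj hfv using hAll
    have main : ∀ (T : Finset (Fin n)), T.Nonempty → ∃ D : Finset (Fin n), D.card ≤ k ∧ i ∈ D ∧
        (∀ j ∈ T, j ≠ i → j ∉ D) ∧ v ∈ span K (x '' ↑D) := by
      intro T hT
      induction hT using Finset.Nonempty.cons_induction with
      | singleton a =>
          refine ⟨f a, le_of_eq (hfc a), hfi a, ?_, hfv a⟩
          intro j hj hji
          rw [Finset.mem_singleton] at hj
          subst hj
          exact hfj j hji
      | cons a T ha hT ih =>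
          obtain ⟨D, hDc, hDi, hDj, hDv⟩ := ih
          refine ⟨f a ∩ D, ?_, ?_, ?_, ?_⟩
          · exact le_trans (Finset.card_le_card Finset.inter_subset_right) hDc
          · exact Finset.mem_inter.mpr ⟨hfi a, hDi⟩
          · intro j hj hji
            rw [Finset.mem_cons] at hj
            rcases hj with rfl | hj
            · intro hmem; exact hfj j hji (Finset.mem_inter.mp hmem).1
            · intro hmem; exact hDj j hj hji (Finset.mem_inter.mp hmem).2
          · exact span_inf hx hn (le_of_eq (hfc a)) hDc ⟨hfv a, hDv⟩
    obtain ⟨D, hDc, hDi, hDj, hDv⟩ := main Finset.univ ⟨i, Finset.mem_univ i⟩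
    have hD : D = {i} := by
      refine Finset.eq_singleton_iff_unique_mem.mpr ⟨hDi, ?_⟩
      intro j hj
      by_contra hji
      exact hDj j (Finset.mem_univ j) hji hj
    rw [hD] at hDv
    simpa using hDv
  -- y-side: for each i there is b with y b in every member of Z containing x i.
  have hyb : ∀ i : Fin n, ∃ b : Fin n, ∀ P ∈ Z, x i ∈ P → y b ∈ P := by
    intro i
    obtain ⟨j0, hj0⟩ := exj i
    obtain ⟨P0, hP0Z, hP0i, -⟩ := key i j0 hj0
    set S : Set (Finset (Fin n)) := {B | B.card ≤ k ∧ x i ∈ span K (y '' ↑B) ∧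
      ∃ P ∈ Z, x i ∈ P ∧ span K (y '' ↑B) ≤ P} with hSdef
    have hSne : S.Nonempty := by
      obtain ⟨B0, hB0c, hB0⟩ := hZY hP0Z
      refine ⟨B0, le_of_eq hB0c, ?_, P0, hP0Z, hP0i, ?_⟩
      · rw [← hB0]; exact hP0i
      · rw [hB0]
    obtain ⟨B, hBS, hBmin⟩ := Set.exists_min_image S Finset.card (Set.toFinite S) hSne
    obtain ⟨hBc, hBx, Q, hQZ, hQi, hQle⟩ := hBS
    have hle : ∀ P ∈ Z, x i ∈ P → span K (y '' ↑B) ≤ P := by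
      intro P hPZ hPi
      obtain ⟨C, hCc, rfl⟩ := hZY hPZ
      have hxin : x i ∈ span K (y '' ↑(B ∩ C)) :=
        span_inf hy hn hBc (le_of_eq hCc) ⟨hBx, hPi⟩
      have hmem : B ∩ C ∈ S := by
        refine ⟨le_trans (Finset.card_le_card Finset.inter_subset_left) hBc, hxin,
          Q, hQZ, hQi, le_trans (span_mono (Set.image_mono ?_)) hQle⟩
        exact_mod_cast Finset.inter_subset_left
      have hcard := hBmin (B ∩ C) hmem
      have hBC : B ∩ C = B := Finset.eq_of_subset_of_card_le Finset.inter_subset_left hcard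
      have hsub : B ⊆ C := by rw [← hBC]; exact Finset.inter_subset_right
      exact span_mono (Set.image_mono (by exact_mod_cast hsub))
    have hBne : B.Nonempty := by
      refine Finset.nonempty_iff_ne_empty.mpr fun h => hx0 i ?_
      subst h
      simpa using hBx
    obtain ⟨b, hb⟩ := hBne
    exact ⟨b, fun P hPZ hPi => hle P hPZ hPi (subset_span ⟨b, by simpa using hb, rfl⟩)⟩
  choose σ hσ using hyb
  have hσspan : ∀ i, y (σ i) ∈ (span K {x i} : Submodule K W) :=
    fun i => inter_x i (y (σ i)) (hσ i)
  have hrep : ∀ i, ∃ c : K, c ≠ 0 ∧ y (σ i) = c • x i := by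
    intro i
    obtain ⟨c, hc⟩ := Submodule.mem_span_singleton.mp (hσspan i)
    refine ⟨c, ?_, hc.symm⟩
    rintro rfl
    exact hy0 (σ i) (by rw [← hc, zero_smul])
  choose c hc0 hcy using hrep
  have hσinj : Function.Injective σ := by
    intro i i' h
    by_contra hne'
    have heq : c i • x i = c i' • x i' := by rw [← hcy i, ← hcy i', h]
    have hxx : x i = ((c i)⁻¹ * c i') • x i' := by
      calc x i = (c i)⁻¹ • (c i • x i) := by
            rw [← mul_smul, inv_mul_cancel₀ (hc0 i), one_smul]
        _ = (c i)⁻¹ • (c i' • x i') := by rw [heq]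
        _ = ((c i)⁻¹ * c i') • x i' := by rw [mul_smul]
    have hmem : x i ∈ span K (x '' ↑({i'} : Finset (Fin n))) := by
      simp only [Finset.coe_singleton, Set.image_singleton]
      exact Submodule.mem_span_singleton.mpr ⟨_, hxx.symm⟩
    have := (mem_span_iff hx hn {i'} (by simp; omega) i).mp hmem
    rw [Finset.mem_singleton] at this
    exact hne' this
  have hσbij : Function.Bijective σ := Finite.injective_iff_bijective.mp hσinj
  set e : Fin n ≃ Fin n := Equiv.ofBijective σ hσbij with he
  have hspanBA : ∀ A : Finset (Fin n),
      span K (y '' ↑(A.image σ)) = span K (x '' ↑A) := by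
    intro A
    apply le_antisymm
    · rw [span_le]
      rintro w ⟨b, hb, rfl⟩
      rw [Finset.coe_image] at hb
      obtain ⟨a, ha, rfl⟩ := hb
      rw [hcy a]
      exact Submodule.smul_mem _ _ (subset_span ⟨a, ha, rfl⟩)
    · rw [span_le]
      rintro w ⟨a, ha, rfl⟩
      have hxa : x a = (c a)⁻¹ • y (σ a) := by
        rw [hcy a, ← mul_smul, inv_mul_cancel₀ (hc0 a), one_smul]
      rw [hxa]
      refine Submodule.smul_mem _ _ (subset_span ⟨σ a, ?_, rfl⟩)
      rw [Finset.coe_image]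
      exact ⟨a, ha, rfl⟩
  apply hne
  ext P
  simp only [JkSet, Set.mem_setOf_eq]
  constructor
  · rintro ⟨B, hBc, rfl⟩
    have himg : (B.image e.symm).image σ = B := by
      rw [Finset.image_image]
      have hcomp : σ ∘ e.symm = id := funext fun b => e.apply_symm_apply b
      rw [hcomp, Finset.image_id]
    refine ⟨B.image e.symm, by rw [Finset.card_image_of_injective _ e.symm.injective, hBc], ?_⟩
    rw [← hspanBA (B.image e.symm), himg]
  · rintro ⟨A, hAc, rfl⟩
    exact ⟨A.image σ, by rw [Finset.card_image_of_injective _ hσinj, hAc],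
      (hspanBA A).symm⟩
end

section
/- Let k ≥ 2, n ≥ 2k, and let X = {x_1,…,x_n} be a (2k)-independent subset of a vector space W over a division ring with dim W ≥ 2k. For P, Q ∈ J_k(X) and 0 ≤ m ≤ k, the following are equivalent: (i) dim(P ∩ Q) = k − m (equivalently, the distance between P and Q in the Grassmann graph is m); (ii) the number of ordered pairs (i,j) with i ≠ j such that x_i ∈ P ∩ Q and x_j ∉ P + Q equals (k−m)(n−k−m). Equivalently, dim(P ∩ Q) = k − m if and only if exactly (k−m)(n−k−m) complement subsets of J_k(X) contain both P and Q. -/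
open Submodule Set Function Module

section Aux

variable {K W : Type*} [DivisionRing K] [AddCommGroup W] [Module K W] {n : ℕ} {x : Fin n → W}

/-- Restriction of a linearly independent subfamily to a smaller index finset. -/
lemma li_restrict {T : Finset (Fin n)} (hT : LinearIndependent K (fun i : T => x (i : Fin n)))
    {S : Finset (Fin n)} (hST : S ⊆ T) :
    LinearIndependent K (fun i : S => x (i : Fin n)) := by
  have hf : Function.Injective (fun a : S => (⟨(a : Fin n), hST a.2⟩ : T)) := by
    intro a b hab
    exact Subtype.ext (congrArg (fun t : T => (t : Fin n)) hab)
  exact hT.comp _ hf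

lemma notMem_span_of_li {T : Finset (Fin n)} (hT : LinearIndependent K (fun i : T => x (i : Fin n)))
    {S : Finset (Fin n)} (hST : S ⊆ T) {j : Fin n} (hjT : j ∈ T) (hjS : j ∉ S) :
    x j ∉ Submodule.span K (x '' ↑S) := by
  have himg : (fun i : T => x (i : Fin n)) '' {a : T | (a : Fin n) ∈ S} = x '' ↑S := by
    ext w
    constructor
    · rintro ⟨a, ha, rfl⟩
      exact ⟨a, ha, rfl⟩
    · rintro ⟨i, hi, rfl⟩
      exact ⟨⟨i, hST hi⟩, hi, rfl⟩
  have := hT.notMem_span_image (x := (⟨j, hjT⟩ : T)) (s := {a : T | (a : Fin n) ∈ S}) hjS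
  rwa [himg] at this

end Aux

theorem dist_iff_complement_count'
    {K W : Type*} [DivisionRing K] [AddCommGroup W] [Module K W]
    (n k : ℕ) (hk : 2 ≤ k) (hn : 2 * k ≤ n)
    (hW : ((2 * k : ℕ) : Cardinal) ≤ Module.rank K W)
    (x : Fin n → W) (hxinj : Function.Injective x)
    (hx : ∀ A : Finset (Fin n), A.card = 2 * k →
      LinearIndependent K (fun i : A => x (i : Fin n)))
    (P Q : Submodule K W)
    (hP : ∃ A : Finset (Fin n), A.card = k ∧ P = Submodule.span K (x '' ↑A))
    (hQ : ∃ A : Finset (Fin n), A.card = k ∧ Q = Submodule.span K (x '' ↑A))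
    (m : ℕ) (hm : m ≤ k) :
    Module.finrank K ↥(P ⊓ Q) = k - m ↔
      {p : Fin n × Fin n | p.1 ≠ p.2 ∧ x p.1 ∈ P ⊓ Q ∧ x p.2 ∉ P ⊔ Q}.ncard =
        (k - m) * (n - k - m) := by
  obtain ⟨A, hA, rfl⟩ := hP
  obtain ⟨B, hB, rfl⟩ := hQ
  set P := Submodule.span K (x '' ↑A) with hPdef
  set Q := Submodule.span K (x '' ↑B) with hQdef
  -- linear independence of subfamilies of size ≤ 2k
  have hLI : ∀ S : Finset (Fin n), S.card ≤ 2 * k →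
      LinearIndependent K (fun i : S => x (i : Fin n)) := by
    intro S hS
    obtain ⟨T, hST, hT⟩ := Finset.exists_superset_card_eq hS (by simpa using hn)
    exact li_restrict (hx T hT) hST
  -- membership criterion
  have hmem : ∀ S : Finset (Fin n), S.card < 2 * k → ∀ j : Fin n,
      x j ∈ Submodule.span K (x '' ↑S) ↔ j ∈ S := by
    intro S hS j
    constructor
    · intro hxj
      by_contra hjS
      have hins : (insert j S).card ≤ 2 * k := by
        rw [Finset.card_insert_of_notMem hjS]; omega
      exact notMem_span_of_li (hLI _ hins) (Finset.subset_insert j S)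
        (Finset.mem_insert_self j S) hjS hxj
    · intro hjS
      exact Submodule.subset_span ⟨j, hjS, rfl⟩
  set C := A ∩ B with hCdef
  set U := A ∪ B with hUdef
  have hcard : U.card + C.card = 2 * k := by
    rw [hUdef, hCdef, Finset.card_union_add_card_inter, hA, hB]; omega
  have hCk : C.card ≤ k := hA ▸ Finset.card_le_card Finset.inter_subset_left
  -- finite dimensionality
  haveI : FiniteDimensional K P :=
    FiniteDimensional.span_of_finite K ((A : Set (Fin n)).toFinite.image x)
  haveI : FiniteDimensional K Q :=
    FiniteDimensional.span_of_finite K ((B : Set (Fin n)).toFinite.image x)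
  have hfr : ∀ S : Finset (Fin n), S.card ≤ 2 * k →
      Module.finrank K ↥(Submodule.span K (x '' ↑S)) = S.card := by
    intro S hS
    have himg : x '' ↑S = Set.range (fun i : S => x (i : Fin n)) := by
      ext w
      constructor
      · rintro ⟨i, hi, rfl⟩
        exact ⟨⟨i, hi⟩, rfl⟩
      · rintro ⟨i, rfl⟩
        exact ⟨i, i.2, rfl⟩
    rw [himg, finrank_span_eq_card (hLI S hS), Fintype.card_coe]
  have hsup : P ⊔ Q = Submodule.span K (x '' ↑U) := by
    rw [hPdef, hQdef, hUdef, Finset.coe_union, Set.image_union, Submodule.span_union]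
  have hfrinf : Module.finrank K ↥(P ⊓ Q) = C.card := by
    have h1 := Submodule.finrank_sup_add_finrank_inf_eq P Q
    rw [hfr A (by omega), hfr B (by omega), hA, hB] at h1
    rw [hsup, hfr U (by omega)] at h1
    omega
  -- the pair set
  have hset : {p : Fin n × Fin n | p.1 ≠ p.2 ∧ x p.1 ∈ P ⊓ Q ∧ x p.2 ∉ P ⊔ Q}
      = ↑(C ×ˢ Uᶜ) := by
    ext ⟨i, j⟩
    simp only [Set.mem_setOf_eq, Finset.coe_product, Set.mem_prod, Finset.mem_coe,
      Finset.mem_compl]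
    constructor
    · rintro ⟨hne, hij, hj⟩
      have hiA : i ∈ A := (hmem A (by omega) i).mp hij.1
      have hiB : i ∈ B := (hmem B (by omega) i).mp hij.2
      have hiC : i ∈ C := Finset.mem_inter.mpr ⟨hiA, hiB⟩
      have hC1 : 1 ≤ C.card := Finset.card_pos.mpr ⟨i, hiC⟩
      rw [hsup] at hj
      refine ⟨hiC, fun hjU => hj ((hmem U (by omega) j).mpr hjU)⟩
    · rintro ⟨hiC, hjU⟩
      have hiA := Finset.mem_inter.mp hiC
      have hC1 : 1 ≤ C.card := Finset.card_pos.mpr ⟨i, hiC⟩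
      refine ⟨?_, ⟨Submodule.subset_span ⟨i, hiA.1, rfl⟩,
        Submodule.subset_span ⟨i, hiA.2, rfl⟩⟩, ?_⟩
      · rintro rfl
        exact hjU (Finset.mem_union_left _ hiA.1)
      · rw [hsup]
        exact fun h => hjU ((hmem U (by omega) j).mp h)
  have hncard : {p : Fin n × Fin n | p.1 ≠ p.2 ∧ x p.1 ∈ P ⊓ Q ∧ x p.2 ∉ P ⊔ Q}.ncard
      = C.card * (n - U.card) := by
    rw [hset, Set.ncard_coe_finset, Finset.card_product, Finset.card_compl,
      Fintype.card_fin]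
  rw [hfrinf, hncard]
  -- pure arithmetic
  have key : ∀ a b X : ℕ, a * (X + a) = b * (X + b) → a = b := by
    intro a b X h
    rcases Nat.lt_trichotomy a b with h1 | h1 | h1
    · exfalso; nlinarith
    · exact h1
    · exfalso; nlinarith
  constructor
  · intro h
    rw [h]
    have : n - U.card = n - k - m := by omega
    rw [this]
  · intro h
    have e1 : n - U.card = n - 2 * k + C.card := by omega
    have e2 : n - k - m = n - 2 * k + (k - m) := by omega
    rw [e1, e2] at h
    exact key _ _ _ h


/-- For `P, Q ∈ J_k(X)` and `0 ≤ m ≤ k`: `dim (P ∩ Q) = k - m` (i.e. the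
Grassmann distance between `P` and `Q` is `m`) if and only if the number of ordered pairs
`(i,j)` with `i ≠ j`, `x i ∈ P ∩ Q` and `x j ∉ P + Q` (equivalently, the number of
complement subsets `J(+i,-j)` containing both `P` and `Q`) equals `(k-m)(n-k-m)`. -/
theorem dist_iff_complement_count
    {K W : Type*} [DivisionRing K] [AddCommGroup W] [Module K W]
    (n k : ℕ) (hk : 2 ≤ k) (hn : 2 * k ≤ n)
    (hW : ((2 * k : ℕ) : Cardinal) ≤ Module.rank K W)
    (x : Fin n → W) (hxinj : Function.Injective x) (hx : MIndep K (2 * k) x)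
    (P Q : Submodule K W) (hP : P ∈ JkSet K k x) (hQ : Q ∈ JkSet K k x)
    (m : ℕ) (hm : m ≤ k) :
    Module.finrank K ↥(P ⊓ Q) = k - m ↔
      {p : Fin n × Fin n | p.1 ≠ p.2 ∧ x p.1 ∈ P ⊓ Q ∧ x p.2 ∉ P ⊔ Q}.ncard =
        (k - m) * (n - k - m) := by
  exact dist_iff_complement_count' n k hk hn hW x hxinj hx P Q hP hQ m hm
end

section
/- Let V be an n-dimensional left vector space over a division ring R and let 1 < k ≤ n−k. Consider the graph A_k whose vertices are the apartments of G_k(V), two apartments being adjacent if and only if their intersection is a maximal inexact subset. Then the graph A_k is connected. -/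
open Submodule Set Function Module

/-- Apartments of `G_k(V)` for an `n`-dimensional space `V`: the sets of `k`-dimensional
subspaces spanned by subsets of a base of `V`. -/
def IsApartmentSet (R V : Type*) [DivisionRing R] [AddCommGroup V] [Module R V]
    (n k : ℕ) (𝒜 : Set (Submodule R V)) : Prop :=
  ∃ b : Basis (Fin n) R V, 𝒜 = JkSet R k ⇑b

/-- A maximal inexact subset of `J`: an inexact subset maximal with respect to inclusion
among the inexact subsets of `J`. -/
def MaxInexactIn (R : Type*) {W : Type*} [DivisionRing R] [AddCommGroup W] [Module R W]
    (n k : ℕ) (J Z : Set (Submodule R W)) : Prop :=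
  Z ⊆ J ∧ InexactIn R n k J Z ∧
    ∀ Z' ⊆ J, InexactIn R n k J Z' → Z ⊆ Z' → Z' = Z

/-- The graph `A_k` whose vertices are the apartments of `G_k(V)`, two apartments being
adjacent iff their intersection is a maximal inexact subset (of each of them). -/
def apartmentGraph (R V : Type*) [DivisionRing R] [AddCommGroup V] [Module R V]
    (n k : ℕ) : SimpleGraph {𝒜 : Set (Submodule R V) // IsApartmentSet R V n k 𝒜} where
  Adj A A' := A ≠ A' ∧ MaxInexactIn R n k A.1 (A.1 ∩ A'.1) ∧
    MaxInexactIn R n k A'.1 (A.1 ∩ A'.1)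
  symm := by
    constructor
    intro A A' h
    exact ⟨h.1.symm, by rw [Set.inter_comm]; exact h.2.2, by rw [Set.inter_comm]; exact h.2.1⟩
  loopless := by
    constructor
    intro A h
    exact h.1 rfl

section generic
variable {R W ι : Type*} [DivisionRing R] [AddCommGroup W] [Module R W]

lemma indep_not_mem_span {v : ι → W} (hv : LinearIndependent R v) {s : Set ι} {i : ι}
    (hi : i ∉ s) : v i ∉ span R (v '' s) := by
  intro h
  have hd : Disjoint (span R (v '' {i})) (span R (v '' s)) :=
    hv.disjoint_span_image (by simpa using hi)
  have h1 : v i ∈ span R (v '' {i}) := subset_span (mem_image_of_mem v rfl)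
  have := hd.le_bot ⟨h1, h⟩
  exact hv.ne_zero i (by simpa using this)

lemma indep_mem_span_iff {v : ι → W} (hv : LinearIndependent R v) {s : Set ι} {i : ι} :
    v i ∈ span R (v '' s) ↔ i ∈ s := by
  refine ⟨fun h => ?_, fun h => subset_span (mem_image_of_mem v h)⟩
  by_contra hi
  exact indep_not_mem_span hv hi h

lemma indep_span_inter {v : ι → W} (hv : LinearIndependent R v) (s t : Set ι) :
    span R (v '' s) ⊓ span R (v '' t) = span R (v '' (s ∩ t)) := by
  have hs : span R (v '' s) = span R (v '' (s ∩ t)) ⊔ span R (v '' (s \ t)) := by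
    rw [← Submodule.span_union, ← Set.image_union, Set.inter_union_diff]
  have ht : span R (v '' t) = span R (v '' (s ∩ t)) ⊔ span R (v '' (t \ s)) := by
    rw [← Submodule.span_union, ← Set.image_union, Set.inter_comm,
      Set.inter_union_diff]
  have hd : Disjoint (span R (v '' (t \ s))) (span R (v '' s)) :=
    hv.disjoint_span_image (Set.disjoint_sdiff_left)
  rw [hs, ht]
  have hle : span R (v '' (s ∩ t)) ≤ span R (v '' (s ∩ t)) ⊔ span R (v '' (s \ t)) :=
    le_sup_left
  rw [inf_comm, sup_inf_assoc_of_le _ hle]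
  have : span R (v '' (t \ s)) ⊓ (span R (v '' (s ∩ t)) ⊔ span R (v '' (s \ t))) = ⊥ := by
    rw [← hs]
    exact hd.eq_bot
  rw [this, sup_bot_eq]

lemma indep_span_le_subset {v : ι → W} (hv : LinearIndependent R v) {s t : Set ι}
    (h : span R (v '' s) ≤ span R (v '' t)) : s ⊆ t := fun i hi =>
  (indep_mem_span_iff hv).1 (h (subset_span (mem_image_of_mem v hi)))

end generic


section mindep
variable {R W : Type*} [DivisionRing R] [AddCommGroup W] [Module R W] {n k : ℕ}

lemma mindep_restrict {m : ℕ} {y : Fin n → W} (hy : MIndep R m y) (hm : m ≤ n)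
    (U : Finset (Fin n)) (hU : U.card ≤ m) :
    LinearIndependent R (fun i : U => y (i : Fin n)) := by
  obtain ⟨A, hUA, hA⟩ := Finset.exists_superset_card_eq hU (by simpa using hm)
  have hind := hy A hA
  have : (fun i : U => y (i : Fin n)) =
      (fun i : A => y (i : Fin n)) ∘ (fun i : U => (⟨i.1, hUA i.2⟩ : A)) := rfl
  rw [this]
  exact hind.comp _ (fun a b hab => by
    apply Subtype.ext
    have h := Subtype.ext_iff.mp hab; exact h)

lemma restrict_image (y : Fin n → W) (U S : Finset (Fin n)) (h : S ⊆ U) :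
    (fun i : U => y (i : Fin n)) '' (Subtype.val ⁻¹' (S : Set (Fin n))) = y '' ↑S := by
  ext w
  simp only [Set.mem_image, Set.mem_preimage, Finset.mem_coe, Subtype.exists,
    exists_and_right, exists_eq_right]
  constructor
  · rintro ⟨a, ⟨_, ha⟩, rfl⟩
    exact ⟨a, ha, rfl⟩
  · rintro ⟨a, ha, rfl⟩
    exact ⟨a, ⟨h ha, ha⟩, rfl⟩

-- span intersection for 2k-independent family
lemma mindep_span_inter {y : Fin n → W} (hy : MIndep R (2 * k) y) (h2k : 2 * k ≤ n)
    (S T : Finset (Fin n)) (hST : (S ∪ T).card ≤ 2 * k) :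
    span R (y '' ↑S) ⊓ span R (y '' ↑T) = span R (y '' ↑(S ∩ T)) := by
  set U := S ∪ T with hU
  have hSU : S ⊆ U := Finset.subset_union_left
  have hTU : T ⊆ U := Finset.subset_union_right
  have hSTU : S ∩ T ⊆ U := le_trans (Finset.inter_subset_left) hSU
  have hind := mindep_restrict hy h2k U hST
  have := indep_span_inter (R := R) hind (Subtype.val ⁻¹' (S : Set (Fin n)))
    (Subtype.val ⁻¹' (T : Set (Fin n)))
  rw [restrict_image y U S hSU, restrict_image y U T hTU, ← Set.preimage_inter] at this
  rw [this]
  congr 1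
  rw [show ((S : Set (Fin n)) ∩ ↑T) = ((S ∩ T : Finset (Fin n)) : Set (Fin n)) by
    simp [Finset.coe_inter]]
  rw [restrict_image y U (S ∩ T) hSTU]

lemma mindep_mem_span_iff {y : Fin n → W} (hy : MIndep R (2 * k) y) (h2k : 2 * k ≤ n)
    {i : Fin n} {S : Finset (Fin n)} (hS : (insert i S).card ≤ 2 * k) :
    y i ∈ span R (y '' ↑S) ↔ i ∈ S := by
  set U := insert i S with hU
  have hSU : S ⊆ U := Finset.subset_insert _ _
  have hind := mindep_restrict hy h2k U hS
  have hiU : i ∈ U := Finset.mem_insert_self _ _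
  have := indep_mem_span_iff (R := R) hind (s := Subtype.val ⁻¹' (S : Set (Fin n)))
    (i := ⟨i, hiU⟩)
  rw [restrict_image y U S hSU] at this
  simpa using this

lemma mindep_span_le_subset {y : Fin n → W} (hy : MIndep R (2 * k) y) (h2k : 2 * k ≤ n)
    {S T : Finset (Fin n)} (hST : (S ∪ T).card ≤ 2 * k)
    (h : span R (y '' ↑S) ≤ span R (y '' ↑T)) : S ⊆ T := by
  have := mindep_span_inter hy h2k S T hST
  rw [inf_eq_left.2 h] at this
  intro s hs
  have : y s ∈ span R (y '' ↑(S ∩ T)) := this ▸ subset_span (mem_image_of_mem y (by simpa using hs))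
  have hcard : (insert s (S ∩ T)).card ≤ 2 * k := by
    calc (insert s (S ∩ T)).card ≤ (S ∪ T).card := Finset.card_le_card (by
      intro a ha
      rcases Finset.mem_insert.1 ha with rfl | ha
      · exact Finset.mem_union_left _ hs
      · exact Finset.mem_union_left _ (Finset.mem_of_mem_inter_left ha))
    _ ≤ 2 * k := hST
  exact Finset.mem_of_mem_inter_right ((mindep_mem_span_iff hy h2k hcard).1 this)

end mindep

section jk
variable {R W : Type*} [DivisionRing R] [AddCommGroup W] [Module R W] {n k : ℕ}

lemma basis_mindep {V : Type*} [AddCommGroup V] [Module R V] (b : Basis (Fin n) R V) (m : ℕ) :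
    MIndep R m ⇑b := fun A _ => b.linearIndependent.comp _ Subtype.val_injective

lemma span_image_congr_lines {u v : Fin n → W} {S : Finset (Fin n)}
    (h : ∀ m ∈ S, span R {u m} = span R {v m}) :
    span R (u '' ↑S) = span R (v '' ↑S) := by
  rw [Submodule.span_eq_iSup_of_singleton_spans (u '' ↑S),
    Submodule.span_eq_iSup_of_singleton_spans (v '' ↑S), iSup_image, iSup_image]
  apply le_antisymm
  · refine iSup₂_le fun m hm => ?_
    rw [h m hm]
    exact le_iSup₂ (f := fun m _ => R ∙ v m) m hm
  · refine iSup₂_le fun m hm => ?_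
    rw [← h m hm]
    exact le_iSup₂ (f := fun m _ => R ∙ u m) m hm

lemma jk_mem (y : Fin n → W) (S : Finset (Fin n)) (hS : S.card = k) :
    span R (y '' ↑S) ∈ JkSet R k y := ⟨S, hS, rfl⟩

/-- If `π` is a bijection with `⟨y (π m)⟩ = ⟨b m⟩` for all `m`, then `J_k(y) = J_k(b)`. -/
lemma jk_eq_of_lines {y b : Fin n → W} (π : Fin n → Fin n) (hπ : Function.Bijective π)
    (h : ∀ m, span R {y (π m)} = span R {b m}) :
    JkSet R k y = JkSet R k b := by
  have key : ∀ S : Finset (Fin n), span R (y '' ↑(S.image π)) = span R (b '' ↑S) := by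
    intro S
    rw [Finset.coe_image, ← Set.image_comp]
    exact span_image_congr_lines (fun m hm => h m)
  ext P
  constructor
  · rintro ⟨U, hU, rfl⟩
    set e := Equiv.ofBijective π hπ
    refine ⟨U.image e.symm, by rw [Finset.card_image_of_injective _ e.symm.injective]; exact hU, ?_⟩
    have : (U.image e.symm).image π = U := by
      rw [Finset.image_image]
      have : π ∘ e.symm = id := by
        funext u; exact e.apply_symm_apply u
      rw [this, Finset.image_id]
    rw [← key (U.image e.symm), this]
  · rintro ⟨S, hS, rfl⟩
    exact ⟨S.image π, by rw [Finset.card_image_of_injective _ hπ.injective]; exact hS,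
      (key S).symm⟩

end jk

section exact
variable {R V : Type*} [DivisionRing R] [AddCommGroup V] [Module R V] {n k : ℕ}

/-- Exactness: if `J_k(Y)` contains the special subset of the apartment of `b` together
with one element `span (b '' S0)` with `i ∈ S0`, `j ∉ S0`, then `J_k(Y) = J_k(b)`. -/
lemma exact_lemma (b : Basis (Fin n) R V) (hk : 1 < k) (h2k : 2 * k ≤ n)
    {i j : Fin n} (hij : i ≠ j)
    {S0 : Finset (Fin n)} (hS0c : S0.card = k) (hiS0 : i ∈ S0) (hjS0 : j ∉ S0)
    {y : Fin n → V} (hy : MIndep R (2 * k) y)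
    (hZ : SpecialSubset R k ⇑b i j ⊆ JkSet R k y)
    (hP : span R (⇑b '' ↑S0) ∈ JkSet R k y) :
    JkSet R k y = JkSet R k ⇑b := by
  classical
  have hk1 : 1 ≤ k := hk.le
  have hn4 : 4 ≤ n := by omega
  have bi : LinearIndependent R ⇑b := b.linearIndependent
  -- membership lemma for b
  have bmem : ∀ (S : Finset (Fin n)) (m : Fin n), b m ∈ span R (⇑b '' ↑S) ↔ m ∈ S := by
    intro S m
    simpa using indep_mem_span_iff (R := R) bi (s := (S : Set (Fin n))) (i := m)
  have binter : ∀ S T : Finset (Fin n),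
      span R (⇑b '' ↑S) ⊓ span R (⇑b '' ↑T) = span R (⇑b '' ↑(S ∩ T)) := by
    intro S T
    rw [Finset.coe_inter]
    exact indep_span_inter bi _ _
  have ycardins : ∀ (m' : Fin n) (U : Finset (Fin n)), U.card = k →
      (insert m' U).card ≤ 2 * k := by
    intro m' U hU
    calc (insert m' U).card ≤ U.card + 1 := Finset.card_insert_le _ _
    _ ≤ 2 * k := by omega
  have ymem : ∀ (m' : Fin n) (U : Finset (Fin n)), U.card = k →
      (y m' ∈ span R (y '' ↑U) ↔ m' ∈ U) := by
    intro m' U hU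
    exact mindep_mem_span_iff hy h2k (ycardins m' U hU)
  have yne : ∀ m' : Fin n, y m' ≠ 0 := by
    intro m'
    have hind := mindep_restrict hy h2k {m'} (by rw [Finset.card_singleton]; omega)
    exact hind.ne_zero ⟨m', Finset.mem_singleton_self m'⟩
  -- Step B : lines off i
  have stepB : ∀ m : Fin n, m ≠ i → ∃ m', span R {y m'} = span R {b m} := by
    intro m hmi
    -- construct S, T with S ∩ T = {m}, i ∉ S ∪ T
    set D : Finset (Fin n) := Finset.univ \ {i, m} with hD
    have hDcard : D.card = n - 2 := by
      rw [hD, Finset.card_sdiff_of_subset (Finset.subset_univ _), Finset.card_univ, Fintype.card_fin]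
      congr 1
      rw [Finset.card_insert_of_notMem (by simpa using hmi.symm), Finset.card_singleton]
    obtain ⟨S₁, hS₁D, hS₁c⟩ := Finset.exists_subset_card_eq (s := D) (n := k - 1) (by omega)
    obtain ⟨T₁, hT₁D, hT₁c⟩ := Finset.exists_subset_card_eq (s := D \ S₁) (n := k - 1) (by
      rw [Finset.card_sdiff_of_subset hS₁D]; omega)
    have hT₁D' : T₁ ⊆ D := hT₁D.trans (Finset.sdiff_subset)
    have hdisj : Disjoint S₁ T₁ := by
      refine Finset.disjoint_left.2 fun a ha ha' => ?_
      exact (Finset.mem_sdiff.1 (hT₁D ha')).2 ha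
    have hmD : m ∉ D := by simp [hD]
    have hiD : i ∉ D := by simp [hD]
    set S := insert m S₁ with hS
    set T := insert m T₁ with hT
    have hScard : S.card = k := by
      rw [hS, Finset.card_insert_of_notMem (fun h => hmD (hS₁D h)), hS₁c]; omega
    have hTcard : T.card = k := by
      rw [hT, Finset.card_insert_of_notMem (fun h => hmD (hT₁D' h)), hT₁c]; omega
    have hiS : i ∉ S := by
      rw [hS]; simp only [Finset.mem_insert]
      rintro (rfl | h)
      · exact hmi rfl
      · exact hiD (hS₁D h)
    have hiT : i ∉ T := by
      rw [hT]; simp only [Finset.mem_insert]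
      rintro (rfl | h)
      · exact hmi rfl
      · exact hiD (hT₁D' h)
    have hSTm : S ∩ T = {m} := by
      ext a
      simp only [hS, hT, Finset.mem_inter, Finset.mem_insert, Finset.mem_singleton]
      constructor
      · rintro ⟨h1, h2⟩
        rcases h1 with rfl | h1
        · rfl
        · rcases h2 with rfl | h2
          · rfl
          · exact absurd h2 (Finset.disjoint_left.1 hdisj h1)
      · rintro rfl; exact ⟨Or.inl rfl, Or.inl rfl⟩
    -- both spans are in the special subset
    have hSmem : span R (⇑b '' ↑S) ∈ JkSet R k y :=
      hZ ⟨jk_mem ⇑b S hScard, Or.inr (by rw [bmem]; exact hiS)⟩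
    have hTmem : span R (⇑b '' ↑T) ∈ JkSet R k y :=
      hZ ⟨jk_mem ⇑b T hTcard, Or.inr (by rw [bmem]; exact hiT)⟩
    obtain ⟨US, hUSc, hUS⟩ := hSmem
    obtain ⟨UT, hUTc, hUT⟩ := hTmem
    have hinter : span R (y '' ↑US) ⊓ span R (y '' ↑UT) = span R (y '' ↑(US ∩ UT)) := by
      refine mindep_span_inter hy h2k _ _ ?_
      calc (US ∪ UT).card ≤ US.card + UT.card := Finset.card_union_le _ _
      _ ≤ 2 * k := by omega
    have hbm : span R {b m} = span R (y '' ↑(US ∩ UT)) := by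
      rw [← hinter, ← hUS, ← hUT, binter, hSTm]
      congr 1
      simp
    have hne : (US ∩ UT).Nonempty := by
      by_contra h
      rw [Finset.not_nonempty_iff_eq_empty.1 h] at hbm
      simp only [Finset.coe_empty, Set.image_empty, Submodule.span_empty] at hbm
      have : b m ∈ (⊥ : Submodule R V) := by
        rw [← hbm]; exact Submodule.mem_span_singleton_self _
      exact b.ne_zero m (by simpa using this)
    obtain ⟨m', hm'⟩ := hne
    refine ⟨m', ?_⟩
    have h1 : y m' ∈ span R {b m} := by
      rw [hbm]
      exact subset_span (mem_image_of_mem y (by simpa using hm'))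
    obtain ⟨a, ha⟩ := Submodule.mem_span_singleton.1 h1
    have hane : a ≠ 0 := by
      rintro rfl
      exact yne m' (by rw [← ha, zero_smul])
    rw [← ha]
    exact Submodule.span_singleton_smul_eq (isUnit_iff_ne_zero.2 hane) _
  -- choose the map π
  set π : Fin n → Fin n := fun m => if h : m ≠ i then Classical.choose (stepB m h) else i
    with hπdef
  have hπ : ∀ (m : Fin n), m ≠ i → span R {y (π m)} = span R {b m} := by
    intro m hm
    rw [hπdef]
    simp only [dif_pos hm]
    exact Classical.choose_spec (stepB m hm)
  have hπinj : ∀ m, m ≠ i → ∀ m'', m'' ≠ i → π m = π m'' → m = m'' := by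
    intro m hm m'' hm'' heq
    have : span R {b m} = span R {b m''} := by rw [← hπ m hm, ← hπ m'' hm'', heq]
    have hmem : b m ∈ span R (⇑b '' ↑({m''} : Finset (Fin n))) := by
      simp only [Finset.coe_singleton, Set.image_singleton]
      rw [← this]; exact Submodule.mem_span_singleton_self _
    simpa using (bmem _ _).1 hmem
  set Im : Finset (Fin n) := (Finset.univ.erase i).image π with hIm
  have hImcard : Im.card = n - 1 := by
    rw [hIm, Finset.card_image_of_injOn (fun a ha c hc => hπinj a (Finset.mem_erase.1 ha).1 c
      (Finset.mem_erase.1 hc).1), Finset.card_erase_of_mem (Finset.mem_univ i),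
      Finset.card_univ, Fintype.card_fin]
  have hImcompl : (Imᶜ).card = 1 := by
    rw [Finset.card_compl, hImcard, Fintype.card_fin]; omega
  obtain ⟨i0, hi0⟩ := Finset.card_eq_one.1 hImcompl
  have hi0Im : i0 ∉ Im := by
    have : i0 ∈ Imᶜ := by rw [hi0]; exact Finset.mem_singleton_self _
    simpa using this
  -- lifting spans through π
  have keyπ : ∀ (E : Finset (Fin n)), i ∉ E →
      span R (y '' ↑(E.image π)) = cast rfl (span R (⇑b '' ↑E)) := by
    intro E hiE
    rw [Finset.coe_image, ← Set.image_comp]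
    exact span_image_congr_lines (fun m hm => hπ m (fun h => hiE (h ▸ hm)))
  -- Step D1
  have D1 : ∀ S : Finset (Fin n), S.card = k → i ∈ S →
      span R (⇑b '' ↑S) ∈ JkSet R k y → y i0 ∈ span R (⇑b '' ↑S) := by
    intro S hSc hiS hSy
    obtain ⟨U, hUc, hU⟩ := hSy
    have hsub : (S.erase i).image π ⊆ U := by
      intro u hu
      obtain ⟨m, hm, rfl⟩ := Finset.mem_image.1 hu
      have hmi : m ≠ i := (Finset.mem_erase.1 hm).1
      have h1 : y (π m) ∈ span R (⇑b '' ↑S) := by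
        have : span R {y (π m)} ≤ span R (⇑b '' ↑S) := by
          rw [hπ m hmi]
          refine Submodule.span_le.2 ?_
          simp only [Set.singleton_subset_iff, SetLike.mem_coe]
          exact (bmem S m).2 (Finset.mem_of_mem_erase hm)
        exact this (Submodule.mem_span_singleton_self _)
      rw [hU] at h1
      exact (ymem _ U hUc).1 h1
    have himcard : ((S.erase i).image π).card = k - 1 := by
      rw [Finset.card_image_of_injOn (fun a ha c hc => hπinj a (Finset.mem_erase.1 ha).1 c
        (Finset.mem_erase.1 hc).1), Finset.card_erase_of_mem hiS, hSc]
    obtain ⟨u, huU, huIm⟩ : ∃ u ∈ U, u ∉ (S.erase i).image π := by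
      by_contra h
      push_neg at h
      have : U ⊆ (S.erase i).image π := h
      have := Finset.card_le_card this
      omega
    have hUeq : U = insert u ((S.erase i).image π) := by
      refine (Finset.eq_of_subset_of_card_le ?_ ?_).symm
      · intro a ha
        rcases Finset.mem_insert.1 ha with rfl | ha
        · exact huU
        · exact hsub ha
      · rw [Finset.card_insert_of_notMem huIm, himcard, hUc]; omega
    -- u is not in the image Im
    have hu_i0 : u = i0 := by
      by_contra hne
      have huIm' : u ∈ Im := by
        by_contra h
        have : u ∈ Imᶜ := Finset.mem_compl.2 h
        rw [hi0] at this
        exact hne (Finset.mem_singleton.1 this)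
      obtain ⟨m', hm', rfl⟩ := Finset.mem_image.1 huIm'
      have hm'i : m' ≠ i := (Finset.mem_erase.1 hm').1
      have hm'S : m' ∉ S := by
        intro h
        exact huIm (Finset.mem_image_of_mem π (Finset.mem_erase.2 ⟨hm'i, h⟩))
      set E := insert m' (S.erase i) with hE
      have hiE : i ∉ E := by
        rw [hE]
        simp only [Finset.mem_insert, Finset.mem_erase]
        rintro (rfl | ⟨h, _⟩)
        · exact hm'i rfl
        · exact h rfl
      have hUE : U = E.image π := by
        rw [hUeq, hE, Finset.image_insert]
      have hspan : span R (y '' ↑U) = span R (⇑b '' ↑E) := by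
        rw [hUE]; exact keyπ E hiE
      have : b i ∈ span R (⇑b '' ↑E) := by
        rw [← hspan, ← hU]
        exact (bmem S i).2 hiS
      rw [bmem] at this
      exact hiE this
    subst hu_i0
    rw [hU, hUeq]
    exact subset_span (mem_image_of_mem y (by simp))
  -- Step D2 : y i0 ∈ span {b i, b j}
  have D2 : y i0 ∈ span R (⇑b '' ↑({i, j} : Finset (Fin n))) := by
    set D : Finset (Fin n) := Finset.univ \ {i, j} with hD
    have hDcard : D.card = n - 2 := by
      rw [hD, Finset.card_sdiff_of_subset (Finset.subset_univ _), Finset.card_univ, Fintype.card_fin]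
      congr 1
      rw [Finset.card_insert_of_notMem (by simpa using hij), Finset.card_singleton]
    obtain ⟨S₂, hS₂D, hS₂c⟩ := Finset.exists_subset_card_eq (s := D) (n := k - 2) (by omega)
    obtain ⟨T₂, hT₂D, hT₂c⟩ := Finset.exists_subset_card_eq (s := D \ S₂) (n := k - 2) (by
      rw [Finset.card_sdiff_of_subset hS₂D]; omega)
    have hT₂D' : T₂ ⊆ D := hT₂D.trans (Finset.sdiff_subset)
    have hdisj : Disjoint S₂ T₂ := by
      refine Finset.disjoint_left.2 fun a ha ha' => ?_
      exact (Finset.mem_sdiff.1 (hT₂D ha')).2 ha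
    have hiD : i ∉ D := by simp [hD]
    have hjD : j ∉ D := by simp [hD]
    set S := insert i (insert j S₂) with hS
    set T := insert i (insert j T₂) with hT
    have hScard : S.card = k := by
      rw [hS, Finset.card_insert_of_notMem, Finset.card_insert_of_notMem, hS₂c]
      · omega
      · exact fun h => hjD (hS₂D h)
      · simp only [Finset.mem_insert]
        rintro (rfl | h)
        · exact hij rfl
        · exact hiD (hS₂D h)
    have hTcard : T.card = k := by
      rw [hT, Finset.card_insert_of_notMem, Finset.card_insert_of_notMem, hT₂c]
      · omega
      · exact fun h => hjD (hT₂D' h)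
      · simp only [Finset.mem_insert]
        rintro (rfl | h)
        · exact hij rfl
        · exact hiD (hT₂D' h)
    have hiS : i ∈ S := Finset.mem_insert_self _ _
    have hjS : j ∈ S := Finset.mem_insert_of_mem (Finset.mem_insert_self _ _)
    have hiT : i ∈ T := Finset.mem_insert_self _ _
    have hjT : j ∈ T := Finset.mem_insert_of_mem (Finset.mem_insert_self _ _)
    have hSTij : S ∩ T = {i, j} := by
      ext a
      simp only [hS, hT, Finset.mem_inter, Finset.mem_insert, Finset.mem_singleton]
      constructor
      · rintro ⟨rfl | rfl | h1, h2⟩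
        · exact Or.inl rfl
        · exact Or.inr rfl
        · rcases h2 with rfl | rfl | h2
          · exact Or.inl rfl
          · exact Or.inr rfl
          · exact absurd (Finset.disjoint_left.1 hdisj h1) (by simp [h2])
      · rintro (rfl | rfl)
        · exact ⟨Or.inl rfl, Or.inl rfl⟩
        · exact ⟨Or.inr (Or.inl rfl), Or.inr (Or.inl rfl)⟩
    have hSmem : span R (⇑b '' ↑S) ∈ JkSet R k y :=
      hZ ⟨jk_mem ⇑b S hScard, Or.inl ⟨(bmem S i).2 hiS, (bmem S j).2 hjS⟩⟩
    have hTmem : span R (⇑b '' ↑T) ∈ JkSet R k y :=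
      hZ ⟨jk_mem ⇑b T hTcard, Or.inl ⟨(bmem T i).2 hiT, (bmem T j).2 hjT⟩⟩
    have h1 := D1 S hScard hiS hSmem
    have h2 := D1 T hTcard hiT hTmem
    have : y i0 ∈ span R (⇑b '' ↑S) ⊓ span R (⇑b '' ↑T) := ⟨h1, h2⟩
    rw [binter, hSTij] at this
    exact this
  -- Step D3 : span {y i0} = span {b i}
  have D3 : span R {y i0} = span R {b i} := by
    have h0 := D1 S0 hS0c hiS0 hP
    have : y i0 ∈ span R (⇑b '' ↑S0) ⊓ span R (⇑b '' ↑({i, j} : Finset (Fin n))) := ⟨h0, D2⟩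
    rw [binter] at this
    have hS0ij : S0 ∩ {i, j} = {i} := by
      ext a
      simp only [Finset.mem_inter, Finset.mem_insert, Finset.mem_singleton]
      constructor
      · rintro ⟨ha, rfl | rfl⟩
        · rfl
        · exact absurd ha hjS0
      · rintro rfl; exact ⟨hiS0, Or.inl rfl⟩
    rw [hS0ij] at this
    simp only [Finset.coe_singleton, Set.image_singleton] at this
    obtain ⟨a, ha⟩ := Submodule.mem_span_singleton.1 this
    have hane : a ≠ 0 := by
      rintro rfl
      exact yne i0 (by rw [← ha, zero_smul])
    rw [← ha]
    exact Submodule.span_singleton_smul_eq (isUnit_iff_ne_zero.2 hane) _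
  -- assemble the bijection
  set π' : Fin n → Fin n := fun m => if m = i then i0 else π m with hπ'def
  have hπ'inj : Function.Injective π' := by
    intro a c hac
    rw [hπ'def] at hac
    simp only at hac
    by_cases ha : a = i <;> by_cases hc : c = i
    · rw [ha, hc]
    · rw [if_pos ha, if_neg hc] at hac
      exact absurd (hac ▸ Finset.mem_image_of_mem π (Finset.mem_erase.2 ⟨hc, Finset.mem_univ c⟩))
        hi0Im
    · rw [if_neg ha, if_pos hc] at hac
      exact absurd (hac.symm ▸ Finset.mem_image_of_mem π
        (Finset.mem_erase.2 ⟨ha, Finset.mem_univ a⟩)) hi0Im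
    · rw [if_neg ha, if_neg hc] at hac
      exact hπinj a ha c hc hac
  have hπ'bij : Function.Bijective π' := Finite.injective_iff_bijective.1 hπ'inj
  refine jk_eq_of_lines π' hπ'bij ?_
  intro m
  by_cases hm : m = i
  · rw [hπ'def]; simp only [if_pos hm, hm]; exact D3
  · rw [hπ'def]; simp only [if_neg hm]; exact hπ m hm

end exact

section replace
variable {R V : Type*} [DivisionRing R] [AddCommGroup V] [Module R V] {n k : ℕ}

lemma exists_basis_replace [FiniteDimensional R V] (hV : finrank R V = n)
    (b : Basis (Fin n) R V) (l : Fin n) (c : V) (hc : b.repr c l ≠ 0) :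
    ∃ b' : Basis (Fin n) R V, ⇑b' = Function.update ⇑b l c := by
  classical
  set v : Fin n → V := Function.update ⇑b l c with hv
  have hvl : v l = c := Function.update_self _ _ _
  have hvm : ∀ m, m ≠ l → v m = b m := fun m hm => Function.update_of_ne hm _ _
  have hind : LinearIndependent R v := by
    rw [Fintype.linearIndependent_iff]
    intro g hg
    have hrepr : ∀ t : Fin n, (∑ m, g m * (b.repr (v m)) t) = 0 := by
      intro t
      have h1 := congrArg (fun w => (b.repr w) t) hg
      simp only [map_sum, map_smul, map_zero] at h1
      have h2 : (∑ x : Fin n, g x • b.repr (v x)) t = 0 := by simpa using h1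
      rw [← h2, Finsupp.finset_sum_apply]
      exact Finset.sum_congr rfl fun m _ => by rw [Finsupp.smul_apply, smul_eq_mul]
    have hgl : g l = 0 := by
      have := hrepr l
      rw [Finset.sum_eq_single_of_mem l (Finset.mem_univ l) (fun m _ hm => by
        rw [hvm m hm, b.repr_self, Finsupp.single_apply, if_neg hm, mul_zero])] at this
      rw [hvl] at this
      exact (mul_eq_zero.1 this).resolve_right hc
    intro t
    by_cases ht : t = l
    · rw [ht]; exact hgl
    · have := hrepr t
      rw [Finset.sum_eq_single_of_mem t (Finset.mem_univ t) (fun m _ hm => by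
        by_cases hml : m = l
        · rw [hml, hgl, zero_mul]
        · rw [hvm m hml, b.repr_self, Finsupp.single_apply, if_neg hm, mul_zero])] at this
      rw [hvm t ht, b.repr_self, Finsupp.single_apply, if_pos rfl, mul_one] at this
      exact this
  have hpos : 0 < n := by
    rcases Nat.eq_zero_or_pos n with rfl | h
    · exact absurd (Subsingleton.elim (b.repr c) 0) (by
        intro h0
        exact hc (by rw [h0]; rfl))
    · exact h
  haveI : Nonempty (Fin n) := ⟨⟨0, hpos⟩⟩
  refine ⟨basisOfLinearIndependentOfCardEqFinrank hind (by simp [hV]), ?_⟩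
  exact coe_basisOfLinearIndependentOfCardEqFinrank _ _

end replace

section adjacency
variable {R V : Type*} [DivisionRing R] [AddCommGroup V] [Module R V] {n k : ℕ}

lemma inter_eq_special (b b' : Basis (Fin n) R V) {i j : Fin n} (hij : i ≠ j)
    {α β : R} (hα : α ≠ 0) (hβ : β ≠ 0)
    (hbm : ∀ m, m ≠ i → b' m = b m) (hbi : b' i = α • b i + β • b j) :
    JkSet R k ⇑b ∩ JkSet R k ⇑b' = SpecialSubset R k ⇑b i j := by
  classical
  have bi := b.linearIndependent
  have bi' := b'.linearIndependent
  have bmem : ∀ (S : Finset (Fin n)) (m : Fin n), b m ∈ span R (⇑b '' ↑S) ↔ m ∈ S :=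
    by intro S m; simpa using indep_mem_span_iff (R := R) bi (s := (S : Set (Fin n))) (i := m)
  have bmem' : ∀ (S : Finset (Fin n)) (m : Fin n), b' m ∈ span R (⇑b' '' ↑S) ↔ m ∈ S :=
    by intro S m; simpa using indep_mem_span_iff (R := R) bi' (s := (S : Set (Fin n))) (i := m)
  -- key: if i, j ∈ S then the two spans agree
  have hspan_eq : ∀ S : Finset (Fin n), i ∈ S → j ∈ S →
      span R (⇑b '' ↑S) = span R (⇑b' '' ↑S) := by
    intro S hiS hjS
    apply le_antisymm
    · refine Submodule.span_le.2 ?_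
      rintro w ⟨m, hm, rfl⟩
      simp only [SetLike.mem_coe]
      by_cases hmi : m = i
      · subst hmi
        have h1 : b' m ∈ span R (⇑b' '' ↑S) := (bmem' S m).2 hiS
        have h2 : b' j ∈ span R (⇑b' '' ↑S) := (bmem' S j).2 hjS
        have : b m = α⁻¹ • b' m - (α⁻¹ * β) • b' j := by
          rw [hbi, hbm j hij.symm, smul_add, smul_smul, inv_mul_cancel₀ hα, one_smul,
            mul_smul]
          abel
        rw [this]
        exact sub_mem (Submodule.smul_mem _ _ h1) (Submodule.smul_mem _ _ h2)
      · rw [← hbm m hmi]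
        exact (bmem' S m).2 (by simpa using hm)
    · refine Submodule.span_le.2 ?_
      rintro w ⟨m, hm, rfl⟩
      simp only [SetLike.mem_coe]
      by_cases hmi : m = i
      · subst hmi
        rw [hbi]
        exact add_mem (Submodule.smul_mem _ _ ((bmem S _).2 hiS))
          (Submodule.smul_mem _ _ ((bmem S j).2 hjS))
      · rw [hbm m hmi]
        exact (bmem S m).2 (by simpa using hm)
  have hspan_eq_off : ∀ S : Finset (Fin n), i ∉ S →
      span R (⇑b '' ↑S) = span R (⇑b' '' ↑S) := by
    intro S hiS
    have himg : ⇑b '' (S : Set (Fin n)) = ⇑b' '' ↑S :=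
      Set.image_congr (fun m hm => (hbm m (fun h => hiS (h ▸ (by simpa using hm)))).symm)
    rw [himg]
  ext P
  constructor
  · rintro ⟨⟨S, hSc, rfl⟩, hP'⟩
    obtain ⟨T, hTc, hT⟩ := hP'
    refine ⟨⟨S, hSc, rfl⟩, ?_⟩
    by_cases hiS : i ∈ S
    · left
      refine ⟨(bmem S i).2 hiS, ?_⟩
      -- first, i ∈ T
      have hiT : i ∈ T := by
        by_contra hiT
        have : span R (⇑b '' ↑S) = span R (⇑b '' ↑T) := by
          rw [hT, (hspan_eq_off T hiT)]
        have h1 : (S : Set (Fin n)) ⊆ ↑T := indep_span_le_subset bi this.le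
        have h2 : (T : Set (Fin n)) ⊆ ↑S := indep_span_le_subset bi this.ge
        have hST : S = T := Finset.coe_injective (Set.Subset.antisymm h1 h2)
        exact hiT (hST ▸ hiS)
      have hb'iP : b' i ∈ span R (⇑b '' ↑S) := by
        rw [hT]
        exact (bmem' T i).2 hiT
      have hbiP : b i ∈ span R (⇑b '' ↑S) := (bmem S i).2 hiS
      have : β • b j ∈ span R (⇑b '' ↑S) := by
        have := sub_mem hb'iP (Submodule.smul_mem _ α hbiP)
        rw [hbi] at this
        simpa using this
      have := Submodule.smul_mem _ β⁻¹ this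
      rw [smul_smul, inv_mul_cancel₀ hβ, one_smul] at this
      exact this
    · right
      rw [bmem]
      exact hiS
  · rintro ⟨⟨S, hSc, rfl⟩, hcond⟩
    refine ⟨⟨S, hSc, rfl⟩, ⟨S, hSc, ?_⟩⟩
    rcases hcond with ⟨hbi_mem, hbj_mem⟩ | hbi_nmem
    · exact hspan_eq S ((bmem S i).1 hbi_mem) ((bmem S j).1 hbj_mem)
    · exact hspan_eq_off S (fun h => hbi_nmem ((bmem S i).2 h))

lemma jk_ne (b b' : Basis (Fin n) R V) (hk : 1 < k) (h2k : 2 * k ≤ n) {i j : Fin n}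
    (hij : i ≠ j) {α β : R} (hα : α ≠ 0) (hβ : β ≠ 0)
    (hbm : ∀ m, m ≠ i → b' m = b m) (hbi : b' i = α • b i + β • b j) :
    JkSet R k ⇑b ≠ JkSet R k ⇑b' := by
  classical
  have bmem : ∀ (S : Finset (Fin n)) (m : Fin n), b m ∈ span R (⇑b '' ↑S) ↔ m ∈ S :=
    by
      intro S m
      simpa using indep_mem_span_iff (R := R) b.linearIndependent
        (s := (S : Set (Fin n))) (i := m)
  obtain ⟨S₁, hS₁D, hS₁c⟩ := Finset.exists_subset_card_eq
    (s := Finset.univ \ {i, j}) (n := k - 1) (by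
      rw [Finset.card_sdiff_of_subset (Finset.subset_univ _), Finset.card_univ, Fintype.card_fin]
      have : ({i, j} : Finset (Fin n)).card ≤ 2 :=
        le_trans (Finset.card_insert_le _ _) (by simp)
      omega)
  set S := insert i S₁ with hS
  have hiS₁ : i ∉ S₁ := fun h => by simpa using (Finset.mem_sdiff.1 (hS₁D h)).2
  have hjS : j ∉ S := by
    rw [hS]
    simp only [Finset.mem_insert]
    rintro (rfl | h)
    · exact hij rfl
    · simpa using (Finset.mem_sdiff.1 (hS₁D h)).2
  have hScard : S.card = k := by
    rw [hS, Finset.card_insert_of_notMem hiS₁, hS₁c]; omega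
  intro heq
  have hPmem : span R (⇑b '' ↑S) ∈ JkSet R k ⇑b ∩ JkSet R k ⇑b' := by
    constructor
    · exact jk_mem ⇑b S hScard
    · rw [← heq]; exact jk_mem ⇑b S hScard
  rw [inter_eq_special b b' hij hα hβ hbm hbi] at hPmem
  rcases hPmem.2 with ⟨_, hj⟩ | hi
  · exact hjS ((bmem S j).1 hj)
  · exact hi ((bmem S i).2 (Finset.mem_insert_self _ _))

lemma max_side (b b' : Basis (Fin n) R V) (hk : 1 < k) (h2k : 2 * k ≤ n) {i j : Fin n}
    (hij : i ≠ j) {α β : R} (hα : α ≠ 0) (hβ : β ≠ 0)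
    (hbm : ∀ m, m ≠ i → b' m = b m) (hbi : b' i = α • b i + β • b j) :
    MaxInexactIn R n k (JkSet R k ⇑b) (JkSet R k ⇑b ∩ JkSet R k ⇑b') := by
  classical
  have bmem : ∀ (S : Finset (Fin n)) (m : Fin n), b m ∈ span R (⇑b '' ↑S) ↔ m ∈ S :=
    by
      intro S m
      simpa using indep_mem_span_iff (R := R) b.linearIndependent
        (s := (S : Set (Fin n))) (i := m)
  have hne := jk_ne b b' hk h2k hij hα hβ hbm hbi
  have hspecial := inter_eq_special (k := k) b b' hij hα hβ hbm hbi
  refine ⟨Set.inter_subset_left, ⟨⇑b', b'.injective, basis_mindep b' _, hne.symm,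
    Set.inter_subset_right⟩, ?_⟩
  intro Z' hZ'A ⟨y, hyinj, hy2k, hyne, hZ'y⟩ hZZ'
  refine Set.Subset.antisymm ?_ hZZ'
  intro P hP
  by_contra hPZ
  obtain ⟨S, hSc, rfl⟩ := hZ'A hP
  have hPspec : span R (⇑b '' ↑S) ∉ SpecialSubset R k ⇑b i j := by
    rw [← hspecial]; exact hPZ
  have hiS : i ∈ S := by
    by_contra h
    exact hPspec ⟨jk_mem ⇑b S hSc, Or.inr (fun hb => h ((bmem S i).1 hb))⟩
  have hjS : j ∉ S := by
    intro h
    exact hPspec ⟨jk_mem ⇑b S hSc, Or.inl ⟨(bmem S i).2 hiS, (bmem S j).2 h⟩⟩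
  have := exact_lemma b hk h2k hij hSc hiS hjS hy2k
    (le_trans (le_of_eq hspecial.symm) (le_trans hZZ' hZ'y)) (hZ'y hP)
  exact hyne this

end adjacency


section reach
variable {R V : Type*} [DivisionRing R] [AddCommGroup V] [Module R V] {n k : ℕ}

/-- The vertex of the apartment graph associated with a basis. -/
def aVert (n k : ℕ) (b : Basis (Fin n) R V) : {𝒜 : Set (Submodule R V) // IsApartmentSet R V n k 𝒜} :=
  ⟨JkSet R k ⇑b, ⟨b, rfl⟩⟩

lemma aVert_eq {b b' : Basis (Fin n) R V} (h : JkSet R k ⇑b = JkSet R k ⇑b') :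
    aVert n k b = aVert n k b' := Subtype.ext h

lemma adj_step (hk : 1 < k) (h2k : 2 * k ≤ n) (b b' : Basis (Fin n) R V)
    {i j : Fin n} (hij : i ≠ j) {α β : R} (hα : α ≠ 0) (hβ : β ≠ 0)
    (hbm : ∀ m, m ≠ i → b' m = b m) (hbi : b' i = α • b i + β • b j) :
    (apartmentGraph R V n k).Adj (aVert n k b) (aVert n k b') := by
  have hne := jk_ne b b' hk h2k hij hα hβ hbm hbi
  refine ⟨fun h => hne (congrArg Subtype.val h), max_side b b' hk h2k hij hα hβ hbm hbi, ?_⟩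
  have hsym_m : ∀ m, m ≠ i → b m = b' m := fun m hm => (hbm m hm).symm
  have hsym_i : b i = α⁻¹ • b' i + (-(α⁻¹ * β)) • b' j := by
    rw [hbi, hbm j hij.symm, smul_add, smul_smul, inv_mul_cancel₀ hα, one_smul,
      smul_smul, neg_smul]
    abel
  have hmax2 := max_side b' b hk h2k hij (inv_ne_zero hα)
    (neg_ne_zero.2 (mul_ne_zero (inv_ne_zero hα) hβ)) hsym_m hsym_i
  show MaxInexactIn R n k (JkSet R k ⇑b') (JkSet R k ⇑b ∩ JkSet R k ⇑b')
  rw [Set.inter_comm]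
  exact hmax2

lemma reach_one_replace [FiniteDimensional R V] (hV : finrank R V = n)
    (hk : 1 < k) (h2k : 2 * k ≤ n) (b b' : Basis (Fin n) R V) (l : Fin n)
    (hbm : ∀ m, m ≠ l → b' m = b m) :
    (apartmentGraph R V n k).Reachable (aVert n k b) (aVert n k b') := by
  classical
  set γ := b.repr (b' l) with hγ
  have hb'img : ∀ (S : Finset (Fin n)), l ∉ S → ⇑b '' ↑S = ⇑b' '' ↑S := by
    intro S hlS
    exact Set.image_congr (fun m hm => (hbm m (fun h => hlS (h ▸ (by simpa using hm)))).symm)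
  have hγl : γ l ≠ 0 := by
    intro h0
    have hsum : b' l = ∑ m ∈ Finset.univ.erase l, γ m • b m := by
      rw [hγ]
      conv_lhs => rw [← b.sum_repr (b' l)]
      rw [← Finset.sum_erase_add _ _ (Finset.mem_univ l), h0, zero_smul, add_zero]
    have hmem : b' l ∈ span R (⇑b '' ↑(Finset.univ.erase l)) := by
      rw [hsum]
      exact Submodule.sum_mem _ (fun m hm => Submodule.smul_mem _ _
        (subset_span (mem_image_of_mem _ (by simpa using hm))))
    rw [hb'img _ (by simp)] at hmem
    exact indep_not_mem_span b'.linearIndependent (by simp) hmem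
  have hlT : l ∈ γ.support := Finsupp.mem_support_iff.2 hγl
  -- chain of elementary replacements
  have main : ∀ T' : Finset (Fin n), T' ⊆ γ.support.erase l → ∃ b'' : Basis (Fin n) R V,
      (∀ m, m ≠ l → b'' m = b m) ∧ b'' l = (∑ m ∈ insert l T', γ m • b m) ∧
      (apartmentGraph R V n k).Reachable (aVert n k b) (aVert n k b'') := by
    intro T'
    induction T' using Finset.induction_on with
    | empty =>
      intro _
      have hrepr : b.repr (γ l • b l) l ≠ 0 := by
        rw [map_smul, Finsupp.smul_apply, b.repr_self, Finsupp.single_apply, if_pos rfl]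
        simpa using hγl
      obtain ⟨b0, hb0⟩ := exists_basis_replace hV b l (γ l • b l) hrepr
      have hb0m : ∀ m, m ≠ l → b0 m = b m := by
        intro m hm
        rw [show b0 m = Function.update ⇑b l (γ l • b l) m from congrFun hb0 m,
          Function.update_of_ne hm]
      have hb0l : b0 l = γ l • b l := by
        rw [show b0 l = Function.update ⇑b l (γ l • b l) l from congrFun hb0 l,
          Function.update_self]
      refine ⟨b0, hb0m, by rw [hb0l, Finset.sum_insert (Finset.notMem_empty l), Finset.sum_empty, add_zero], ?_⟩
      have : JkSet R k ⇑b = JkSet R k ⇑b0 := by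
        refine (jk_eq_of_lines (y := ⇑b0) (b := ⇑b) id Function.bijective_id ?_).symm
        intro m
        by_cases hm : m = l
        · subst hm
          simp only [id]
          rw [hb0l]
          exact Submodule.span_singleton_smul_eq (isUnit_iff_ne_zero.2 hγl) _
        · simp only [id]; rw [hb0m m hm]
      exact (aVert_eq this) ▸ SimpleGraph.Reachable.refl _
    | @insert a s ha ih =>
      intro hsub
      have hs : s ⊆ γ.support.erase l := (Finset.subset_insert a s).trans hsub
      obtain ⟨b1, hb1m, hb1l, hreach⟩ := ih hs
      have hal : a ≠ l := (Finset.mem_erase.1 (hsub (Finset.mem_insert_self a s))).1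
      have hγa : γ a ≠ 0 :=
        Finsupp.mem_support_iff.1 (Finset.mem_of_mem_erase (hsub (Finset.mem_insert_self a s)))
      set c := (1 : R) • b1 l + γ a • b1 a with hc
      have hrepr : b1.repr c l ≠ 0 := by
        rw [hc, one_smul, map_add, map_smul, Finsupp.add_apply, Finsupp.smul_apply,
          b1.repr_self, b1.repr_self, Finsupp.single_apply, Finsupp.single_apply,
          if_pos rfl, if_neg hal]
        simp
      obtain ⟨b2, hb2⟩ := exists_basis_replace hV b1 l c hrepr
      have hb2m : ∀ m, m ≠ l → b2 m = b1 m := by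
        intro m hm
        rw [show b2 m = Function.update ⇑b1 l c m from congrFun hb2 m,
          Function.update_of_ne hm]
      have hb2l : b2 l = c := by
        rw [show b2 l = Function.update ⇑b1 l c l from congrFun hb2 l, Function.update_self]
      refine ⟨b2, fun m hm => by rw [hb2m m hm, hb1m m hm], ?_, ?_⟩
      · -- sum identity
        have hins : insert l (insert a s) = insert a (insert l s) := Finset.insert_comm _ _ _
        have hanotin : a ∉ insert l s := by
          simp only [Finset.mem_insert]
          rintro (rfl | h)
          · exact hal rfl
          · exact ha h
        rw [hb2l, hc, one_smul, hb1l, hb1m a hal, hins, Finset.sum_insert hanotin, add_comm]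
      · refine hreach.trans ?_
        exact (adj_step hk h2k b1 b2 (Ne.symm hal) one_ne_zero hγa hb2m
          (by rw [hb2l, hc])).reachable
  obtain ⟨b1, hb1m, hb1l, hreach⟩ := main (γ.support.erase l) Finset.Subset.rfl
  have hfun : ⇑b1 = ⇑b' := by
    funext m
    by_cases hm : m = l
    · subst hm
      rw [hb1l, Finset.insert_erase hlT]
      have : ∑ m ∈ γ.support, γ m • b m = ∑ m ∈ Finset.univ, γ m • b m := by
        refine Finset.sum_subset (Finset.subset_univ _) ?_
        intro m _ hm
        rw [Finsupp.notMem_support_iff.1 hm, zero_smul]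
      rw [this, hγ, b.sum_repr]
    · rw [hb1m m hm, hbm m hm]
  have : JkSet R k ⇑b1 = JkSet R k ⇑b' := by rw [hfun]
  exact hreach.trans ((aVert_eq this) ▸ SimpleGraph.Reachable.refl _)

end reach

section mainreach
variable {R V : Type*} [DivisionRing R] [AddCommGroup V] [Module R V] {n k : ℕ}

/-- If every line of `b'` is a line of `b`, the two apartments coincide. -/
lemma jk_eq_of_all_lines (b b' : Basis (Fin n) R V)
    (h : ∀ m, ∃ l, span R {b' m} = span R {b l}) :
    JkSet R k ⇑b' = JkSet R k ⇑b := by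
  classical
  set τ : Fin n → Fin n := fun m => Classical.choose (h m) with hτdef
  have hτ : ∀ m, span R {b' m} = span R {b (τ m)} := fun m => Classical.choose_spec (h m)
  have hτinj : Function.Injective τ := by
    intro m m'' heq
    have h1 : span R {b' m} = span R {b' m''} := by rw [hτ m, hτ m'', heq]
    have h2 : b' m ∈ span R (⇑b' '' ({m''} : Set (Fin n))) := by
      rw [Set.image_singleton, ← h1]
      exact Submodule.mem_span_singleton_self _
    simpa using indep_mem_span_iff (R := R) b'.linearIndependent
      (s := ({m''} : Set (Fin n))) (i := m) |>.1 h2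
  have hτbij := Finite.injective_iff_bijective.1 hτinj
  set e := Equiv.ofBijective τ hτbij with he
  refine jk_eq_of_lines (y := ⇑b') (b := ⇑b) ⇑e.symm e.symm.bijective ?_
  intro m
  have := hτ (e.symm m)
  rwa [show τ (e.symm m) = m from e.apply_symm_apply m] at this

lemma reach_all [FiniteDimensional R V] (hV : finrank R V = n)
    (hk : 1 < k) (h2k : 2 * k ≤ n) (b b' : Basis (Fin n) R V) :
    (apartmentGraph R V n k).Reachable (aVert n k b) (aVert n k b') := by
  classical
  set G := apartmentGraph R V n k with hG
  -- distance between bases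
  have key : ∀ N : ℕ, ∀ b b' : Basis (Fin n) R V,
      (Finset.univ.filter (fun m => ∀ l0, span R {b' m} ≠ span R {b l0})).card ≤ N →
      G.Reachable (aVert n k b) (aVert n k b') := by
    intro N
    induction N with
    | zero =>
      intro b b' h
      have hempty : ∀ m, ∃ l, span R {b' m} = span R {b l} := by
        intro m
        by_contra hc
        push_neg at hc
        have : m ∈ Finset.univ.filter (fun m => ∀ l0, span R {b' m} ≠ span R {b l0}) :=
          Finset.mem_filter.2 ⟨Finset.mem_univ m, hc⟩
        rw [Finset.card_eq_zero.1 (Nat.le_zero.1 h)] at this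
        simpa using this
      exact (aVert_eq (jk_eq_of_all_lines b b' hempty).symm) ▸ SimpleGraph.Reachable.refl _
    | succ N ih =>
      intro b b' h
      by_cases hF : (Finset.univ.filter (fun m => ∀ l0, span R {b' m} ≠ span R {b l0})) = ∅
      · have hempty : ∀ m, ∃ l, span R {b' m} = span R {b l} := by
          intro m
          by_contra hc
          push_neg at hc
          have : m ∈ Finset.univ.filter (fun m => ∀ l0, span R {b' m} ≠ span R {b l0}) :=
            Finset.mem_filter.2 ⟨Finset.mem_univ m, hc⟩
          rw [hF] at this
          simpa using this
        exact (aVert_eq (jk_eq_of_all_lines b b' hempty).symm) ▸ SimpleGraph.Reachable.refl _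
      · obtain ⟨m0, hm0⟩ := Finset.nonempty_of_ne_empty hF
        have hm0' : ∀ l0, span R {b' m0} ≠ span R {b l0} := (Finset.mem_filter.1 hm0).2
        set γ := b.repr (b' m0) with hγ
        -- find a coordinate l with γ l ≠ 0 whose line is not a line of b'
        have hexl : ∃ l, γ l ≠ 0 ∧ ∀ m, span R {b l} ≠ span R {b' m} := by
          by_contra hc
          push_neg at hc
          have hmem : b' m0 ∈ span R (⇑b' '' ↑(Finset.univ.erase m0)) := by
            have hsum : b' m0 = ∑ m ∈ γ.support, γ m • b m := by
              rw [hγ]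
              conv_lhs => rw [← b.sum_repr (b' m0)]
              refine (Finset.sum_subset (Finset.subset_univ _) ?_).symm
              intro m _ hm
              rw [Finsupp.notMem_support_iff.1 hm, zero_smul]
            rw [hsum]
            refine Submodule.sum_mem _ (fun l hl => Submodule.smul_mem _ _ ?_)
            obtain ⟨m, hm⟩ := hc l (Finsupp.mem_support_iff.1 hl)
            have hmm0 : m ≠ m0 := by
              rintro rfl
              exact hm0' l hm.symm
            have h1 : b l ∈ span R {b' m} := by
              rw [← hm]; exact Submodule.mem_span_singleton_self _
            refine Submodule.span_le.2 ?_ h1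
            simp only [Set.singleton_subset_iff, SetLike.mem_coe]
            exact subset_span (mem_image_of_mem _ (by simpa using hmm0))
          exact indep_not_mem_span b'.linearIndependent (by simp) hmem
        obtain ⟨l, hγl, hl⟩ := hexl
        obtain ⟨b'', hb''⟩ := exists_basis_replace hV b l (b' m0) hγl
        have hb''m : ∀ m, m ≠ l → b'' m = b m := by
          intro m hm
          rw [show b'' m = Function.update ⇑b l (b' m0) m from congrFun hb'' m,
            Function.update_of_ne hm]
        have hb''l : b'' l = b' m0 := by
          rw [show b'' l = Function.update ⇑b l (b' m0) l from congrFun hb'' l,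
            Function.update_self]
        have reach1 : G.Reachable (aVert n k b) (aVert n k b'') :=
          reach_one_replace hV hk h2k b b'' l hb''m
        -- descent
        have hsubset : (Finset.univ.filter (fun m => ∀ l0, span R {b' m} ≠ span R {b'' l0})) ⊆
            (Finset.univ.filter (fun m => ∀ l0, span R {b' m} ≠ span R {b l0})).erase m0 := by
          intro m hm
          have hm2 := (Finset.mem_filter.1 hm).2
          refine Finset.mem_erase.2 ⟨?_, Finset.mem_filter.2 ⟨Finset.mem_univ m, ?_⟩⟩
          · rintro rfl
            exact hm2 l (by rw [hb''l])
          · intro l0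
            by_cases hl0 : l0 = l
            · subst hl0
              exact fun hh => hl m hh.symm
            · rw [← hb''m l0 hl0]
              exact hm2 l0
        have hcard : (Finset.univ.filter
            (fun m => ∀ l0, span R {b' m} ≠ span R {b'' l0})).card ≤ N := by
          have h1 := Finset.card_le_card hsubset
          have h2 : ((Finset.univ.filter
              (fun m => ∀ l0, span R {b' m} ≠ span R {b l0})).erase m0).card =
              (Finset.univ.filter (fun m => ∀ l0, span R {b' m} ≠ span R {b l0})).card - 1 :=
            Finset.card_erase_of_mem hm0
          omega
        exact reach1.trans (ih b'' b' hcard)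
  exact key _ b b' le_rfl

end mainreach

/-- For `1 < k ≤ n - k`, the graph `A_k` of apartments of `G_k(V)` is
connected. -/
theorem apartmentGraph_connected
    {R V : Type*} [DivisionRing R] [AddCommGroup V] [Module R V]
    [FiniteDimensional R V] (n k : ℕ) (hV : Module.finrank R V = n)
    (hk : 1 < k) (hkn : k ≤ n - k) :
    (apartmentGraph R V n k).Connected := by
  have h2k : 2 * k ≤ n := by omega
  rw [SimpleGraph.connected_iff]
  have b0 : Basis (Fin n) R V := Module.finBasisOfFinrankEq R V hV
  refine ⟨?_, ⟨aVert n k b0⟩⟩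
  intro A A'
  obtain ⟨𝒜, hA⟩ := A
  obtain ⟨𝒜', hA'⟩ := A'
  obtain ⟨b, rfl⟩ := hA
  obtain ⟨b', rfl⟩ := hA'
  exact reach_all hV hk h2k b b'
end

section
/- Let k ≥ 2 and n > 2k. Let W be a 2k-dimensional left vector space over a division ring, X = {x_1,…,x_n} a (2k)-independent subset of W, and Y = {y*_1,…,y*_n} a (2k)-independent subset of the dual space W*; let U_i denote the annihilator of y*_i in W (a (2k−1)-dimensional subspace). Assume that every U_i is spanned by a subset of X and that every line ⟨x_i⟩ is the intersection of some of the subspaces U_j. Let Z = J_k(X) ∩ J*_k(Y). Then k·|Z| ≤ n·C(2k−1,k). -/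
open Submodule Set Function Module

/-- `J*_k(Y)`: the set of annihilators in `W` of the elements of `J_k(Y)` for a family `y`
of linear functionals; equivalently, the intersections of `k` distinct kernels `U_j`. -/
def JStarSet (K : Type*) {W : Type*} [DivisionRing K] [AddCommGroup W] [Module K W]
    {n : ℕ} (k : ℕ) (y : Fin n → (W →ₗ[K] K)) : Set (Submodule K W) :=
  {P | ∃ A : Finset (Fin n), A.card = k ∧ P = ⨅ i ∈ A, LinearMap.ker (y i)}

/-- Let `W` be `2k`-dimensional, `x` a `(2k)`-independent family of `n`
vectors of `W` and `y` a `(2k)`-independent family of `n` functionals with kernels `U_i`,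
such that every `U_i` is spanned by a subset of `X` and every line `⟨x i⟩` is the
intersection of some of the `U_j`. Then `k·|J_k(X) ∩ J*_k(Y)| ≤ n·C(2k-1,k)`. -/
theorem card_inter_le
    {K W : Type*} [DivisionRing K] [AddCommGroup W] [Module K W]
    [FiniteDimensional K W] (n k : ℕ) (hk : 2 ≤ k) (hn : 2 * k < n)
    (hW : Module.finrank K W = 2 * k)
    (x : Fin n → W) (hxinj : Function.Injective x) (hx : MIndep K (2 * k) x)
    (y : Fin n → (W →ₗ[K] K)) (hyinj : Function.Injective y)
    (hy : MIndep Kᵐᵒᵖ (2 * k) y)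
    (hker : ∀ i, ∃ A : Finset (Fin n),
      LinearMap.ker (y i) = Submodule.span K (x '' ↑A))
    (hline : ∀ i, ∃ T : Finset (Fin n),
      Submodule.span K {x i} = ⨅ j ∈ T, LinearMap.ker (y j)) :
    k * (JkSet K k x ∩ JStarSet K k y).ncard ≤ n * Nat.choose (2 * k - 1) k := by

  classical
  set Z := JkSet K k x ∩ JStarSet K k y with hZdef
  have hZfin : Z.Finite := by
    apply Set.Finite.subset
      (Set.finite_range (fun A : Finset (Fin n) => Submodule.span K (x '' (A : Set (Fin n)))))
    rintro P ⟨⟨A, -, rfl⟩, -⟩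
    exact ⟨A, rfl⟩
  set Zfin := hZfin.toFinset with hZfin'
  have hAex : ∀ P ∈ Z, ∃ A : Finset (Fin n), A.card = k ∧
      P = Submodule.span K (x '' (A : Set (Fin n))) := fun P hP => hP.1
  choose a ha1 ha2 using hAex
  set f : Submodule K W → Finset (Fin n) :=
    fun P => if h : P ∈ Z then a P h else ∅ with hf
  set S : Fin n → Finset (Fin n) :=
    fun j => Finset.univ.filter (fun m => x m ∈ LinearMap.ker (y j)) with hSdef
  -- each functional is nonzero
  have hy0 : ∀ j, y j ≠ 0 := by
    intro j
    obtain ⟨A, hjA, hAcard⟩ := Finset.exists_superset_card_eq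
      (s := {j}) (n := 2 * k) (by simp; omega) (by simp; omega)
    have := (hy A hAcard).ne_zero ⟨j, hjA (Finset.mem_singleton_self j)⟩
    simpa using this
  -- each kernel has dimension < 2k
  have hkerlt : ∀ j, finrank K (LinearMap.ker (y j)) < 2 * k := by
    intro j
    rw [← hW]
    exact Submodule.finrank_lt (fun h => hy0 j (LinearMap.ker_eq_top.mp h))
  -- S j has at most 2k-1 elements
  have hSle : ∀ j, (S j).card ≤ 2 * k - 1 := by
    intro j
    by_contra hcon
    push_neg at hcon
    have h2k : 2 * k ≤ (S j).card := by omega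
    obtain ⟨A, hAS, hAcard⟩ := Finset.exists_subset_card_eq h2k
    have hind := hx A hAcard
    have hmem : ∀ i : A, x (i : Fin n) ∈ LinearMap.ker (y j) := by
      intro i
      exact (Finset.mem_filter.1 (hAS i.2)).2
    have hv : LinearIndependent K
        (fun i : A => (⟨x (i : Fin n), hmem i⟩ : LinearMap.ker (y j))) :=
      LinearIndependent.of_comp ((LinearMap.ker (y j)).subtype) hind
    have hle := hv.fintype_card_le_finrank
    rw [Fintype.card_coe, hAcard] at hle
    exact absurd (lt_of_le_of_lt hle (hkerlt j)) (lt_irrefl _)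
  -- each P ∈ Z is contained in at least k kernels
  have hT : ∀ P ∈ Zfin, k ≤ (Finset.univ.filter
      (fun j => P ≤ LinearMap.ker (y j))).card := by
    intro P hP
    have hPZ : P ∈ Z := hZfin.mem_toFinset.1 hP
    obtain ⟨B, hB, hPB⟩ := hPZ.2
    rw [← hB]
    apply Finset.card_le_card
    intro j hj
    simp only [Finset.mem_filter, Finset.mem_univ, true_and]
    rw [hPB]
    exact iInf₂_le j hj
  -- each kernel contains at most C(2k-1, k) members of Z
  have hcol : ∀ j, (Zfin.filter (fun P => P ≤ LinearMap.ker (y j))).card ≤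
      Nat.choose (2 * k - 1) k := by
    intro j
    have hmaps : ∀ P ∈ Zfin.filter (fun P => P ≤ LinearMap.ker (y j)),
        f P ∈ (S j).powersetCard k := by
      intro P hP
      rw [Finset.mem_filter] at hP
      have hPZ : P ∈ Z := hZfin.mem_toFinset.1 hP.1
      rw [hf]
      simp only [dif_pos hPZ]
      rw [Finset.mem_powersetCard]
      refine ⟨?_, ha1 P hPZ⟩
      intro m hm
      have hxm : x m ∈ P := by
        rw [ha2 P hPZ]
        exact Submodule.subset_span ⟨m, hm, rfl⟩
      simp only [hSdef, Finset.mem_filter, Finset.mem_univ, true_and]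
      exact hP.2 hxm
    have hinj : Set.InjOn f
        ↑(Zfin.filter (fun P => P ≤ LinearMap.ker (y j))) := by
      intro P1 hP1 P2 hP2 hPf
      have hZ1 : P1 ∈ Z := hZfin.mem_toFinset.1 (Finset.mem_filter.1 hP1).1
      have hZ2 : P2 ∈ Z := hZfin.mem_toFinset.1 (Finset.mem_filter.1 hP2).1
      rw [hf] at hPf
      simp only [dif_pos hZ1, dif_pos hZ2] at hPf
      rw [ha2 P1 hZ1, ha2 P2 hZ2, hPf]
    calc (Zfin.filter (fun P => P ≤ LinearMap.ker (y j))).card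
        ≤ ((S j).powersetCard k).card := Finset.card_le_card_of_injOn f hmaps hinj
      _ = (S j).card.choose k := Finset.card_powersetCard k (S j)
      _ ≤ Nat.choose (2 * k - 1) k := Nat.choose_le_choose k (hSle j)
  -- double counting
  have hswap : ∑ P ∈ Zfin, (Finset.univ.filter
        (fun j => P ≤ LinearMap.ker (y j))).card
      = ∑ j, (Zfin.filter (fun P => P ≤ LinearMap.ker (y j))).card := by
    simp only [Finset.card_filter]
    exact Finset.sum_comm
  have hcard : Z.ncard = Zfin.card := Set.ncard_eq_toFinset_card _ hZfin
  calc k * Z.ncard = ∑ _P ∈ Zfin, k := by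
        rw [hcard, Finset.sum_const, smul_eq_mul, Nat.mul_comm]
    _ ≤ ∑ P ∈ Zfin, (Finset.univ.filter
          (fun j => P ≤ LinearMap.ker (y j))).card := Finset.sum_le_sum hT
    _ = ∑ j, (Zfin.filter (fun P => P ≤ LinearMap.ker (y j))).card := hswap
    _ ≤ ∑ _j : Fin n, Nat.choose (2 * k - 1) k :=
        Finset.sum_le_sum (fun j _ => hcol j)
    _ = n * Nat.choose (2 * k - 1) k := by
        rw [Finset.sum_const, smul_eq_mul, Finset.card_univ, Fintype.card_fin]
end

section
/- Let k and n be integers with k ≥ 2 and n ≥ 2k+1, and suppose (n,k) ≠ (5,2). Then k·(C(n−2,k−2) + C(n−1,k)) > n·C(2k−1,k). Moreover, for n = 5 and k = 2 this inequality fails: 2·(C(3,0)+C(4,2)) = 14 < 15 = 5·C(3,2). -/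
lemma aux_a_gt_b (j m : ℕ) (hjm : 1 ≤ j ∨ 1 ≤ m) :
    (2*j+5+m) * Nat.choose (2*j+3) (j+2) <
      (j+2) * (Nat.choose (2*j+3+m) j + Nat.choose (2*j+4+m) (j+2)) := by
  induction m with
  | zero =>
    have hj : 1 ≤ j := by omega
    have e2 : Nat.choose (2*j+3) (j+2) = Nat.choose (2*j+3) (j+1) := by
      have := Nat.choose_symm (show j+2 ≤ 2*j+3 by omega)
      have hsub : 2*j+3 - (j+2) = j+1 := by omega
      rw [hsub] at this
      exact this.symm
    have e1 : Nat.choose (2*j+4) (j+2) =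
        Nat.choose (2*j+3) (j+1) + Nat.choose (2*j+3) (j+2) := by
      have := Nat.choose_succ_succ (2*j+3) (j+1)
      convert this using 2 <;> omega
    have e3 : Nat.choose (2*j+3) (j+1) * (j+1) = Nat.choose (2*j+3) j * (j+3) := by
      have := Nat.choose_succ_right_eq (2*j+3) j
      have hsub : 2*j+3 - j = j+3 := by omega
      rw [hsub] at this
      exact this
    have e4 : 0 < Nat.choose (2*j+3) j := Nat.choose_pos (by omega)
    have key : Nat.choose (2*j+3) (j+1) < (j+2) * Nat.choose (2*j+3) j := by
      have h1 : (j+1) * Nat.choose (2*j+3) (j+1) < (j+1) * ((j+2) * Nat.choose (2*j+3) j) := by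
        have hjj : Nat.choose (2*j+3) j ≤ j*j*Nat.choose (2*j+3) j := by
          simpa using Nat.mul_le_mul_right (Nat.choose (2*j+3) j)
            (show 1 ≤ j*j from Nat.one_le_iff_ne_zero.mpr (by positivity))
        nlinarith [e3, e4, hj, hjj]
      exact Nat.lt_of_mul_lt_mul_left h1
    nlinarith [key, e1, e2]
  | succ m ih =>
    by_cases hc : 1 ≤ j ∨ 1 ≤ m
    · have H := ih hc
      have pascal : Nat.choose (2*j+4+(m+1)) (j+2) =
          Nat.choose (2*j+4+m) (j+1) + Nat.choose (2*j+4+m) (j+2) := by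
        have := Nat.choose_succ_succ (2*j+4+m) (j+1)
        convert this using 2 <;> omega
      have mono1 : Nat.choose (2*j+3+m) j ≤ Nat.choose (2*j+3+(m+1)) j :=
        Nat.choose_le_choose j (by omega)
      have e2 : Nat.choose (2*j+3) (j+2) = Nat.choose (2*j+3) (j+1) := by
        have := Nat.choose_symm (show j+2 ≤ 2*j+3 by omega)
        have hsub : 2*j+3 - (j+2) = j+1 := by omega
        rw [hsub] at this
        exact this.symm
      have mono2 : Nat.choose (2*j+3) (j+1) ≤ Nat.choose (2*j+4+m) (j+1) :=
        Nat.choose_le_choose (j+1) (by omega)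
      nlinarith [H, pascal, mono1, mono2, e2]
    · have hj : j = 0 := by omega
      have hm : m = 0 := by omega
      subst hj; subst hm
      decide

/-- For `k ≥ 2`, `n ≥ 2k+1` and `(n,k) ≠ (5,2)` one has
`k·(C(n-2,k-2) + C(n-1,k)) > n·C(2k-1,k)`, i.e. `a(n,k) > b(n,k)`. Moreover, for `n = 5`
and `k = 2` the inequality fails: `2·(C(3,0)+C(4,2)) = 14 < 15 = 5·C(3,2)`. -/
theorem a_gt_b (n k : ℕ) (hk : 2 ≤ k) (hn : 2 * k + 1 ≤ n) (h : ¬(n = 5 ∧ k = 2)) :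
    n * Nat.choose (2 * k - 1) k <
      k * (Nat.choose (n - 2) (k - 2) + Nat.choose (n - 1) k) ∧
    2 * (Nat.choose 3 0 + Nat.choose 4 2) = 14 ∧ (14 : ℕ) < 15 ∧
      5 * Nat.choose 3 2 = 15 := by
  refine ⟨?_, by decide, by norm_num, by decide⟩
  obtain ⟨j, rfl⟩ : ∃ j, k = j + 2 := ⟨k - 2, by omega⟩
  obtain ⟨m, rfl⟩ : ∃ m, n = 2*j+5+m := ⟨n - (2*j+5), by omega⟩
  have h1 : 2*j+5+m - 2 = 2*j+3+m := by omega
  have h2 : 2*j+5+m - 1 = 2*j+4+m := by omega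
  have h3 : 2*(j+2) - 1 = 2*j+3 := by omega
  have h4 : j+2 - 2 = j := by omega
  rw [h1, h2, h3, h4]
  exact aux_a_gt_b j m (by omega)
end
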